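/- arXiv:0901.0805 — 7 statements merged into one kernel-verified Lean document; each statement's English description precedes it below -/
import Mathlib

section
/- Let $G$ be a finite group, $p$ a prime, $H$ a strongly $p$-embedded subgroup of $G$, and $K \le G$ a subgroup with $K \not\le H$ such that $p$ divides $|H \cap K|$. Then $H \cap K$ is a strongly $p$-embedded subgroup of $K$. -/
/-- The conjugate subgroup `g H g⁻¹`. -/
def conjSub {G : Type*} [Group G] (g : G) (H : Subgroup G) : Subgroup G :=
  Subgroup.map (MulAut.conj g).toMonoidHom H

/-- `H` is a strongly `p`-embedded subgroup of `G` : `H < G`, `p` divides `|H|`, and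
`p` does not divide `|H ∩ H^g|` for every `g ∈ G \ H`. -/
def IsStronglyPEmbedded {G : Type*} [Group G] (p : ℕ) (H : Subgroup G) : Prop :=
  H ≠ ⊤ ∧ (p ∣ Nat.card H) ∧ ∀ g : G, g ∉ H → ¬ (p ∣ Nat.card ↥(H ⊓ conjSub g H))

/-- `M` is a strongly `p`-embedded subgroup of the subgroup `K`. -/
def IsStronglyPEmbeddedIn {G : Type*} [Group G] (p : ℕ) (M K : Subgroup G) : Prop :=
  M ≤ K ∧ M ≠ K ∧ (p ∣ Nat.card M) ∧
    ∀ g ∈ K, g ∉ M → ¬ (p ∣ Nat.card ↥(M ⊓ conjSub g M))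

theorem inter_strongly_p_embedded {G : Type*} [Group G] [Finite G]
    (p : ℕ) (hp : p.Prime) (H : Subgroup G) (hH : IsStronglyPEmbedded p H)
    (K : Subgroup G) (hKH : ¬ K ≤ H) (hdvd : p ∣ Nat.card ↥(H ⊓ K)) :
    IsStronglyPEmbeddedIn p (H ⊓ K) K := by
  obtain ⟨-, -, hstr⟩ := hH
  refine ⟨inf_le_right, ?_, hdvd, ?_⟩
  · intro h
    exact hKH (h ▸ inf_le_left)
  · intro g hgK hg hdvd'
    have hgH : g ∉ H := fun hgH => hg ⟨hgH, hgK⟩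
    refine hstr g hgH (hdvd'.trans (Subgroup.card_dvd_of_le ?_))
    refine inf_le_inf (inf_le_left) ?_
    exact Subgroup.map_mono inf_le_left
end

section
/- Let $G$ be a finite group, $p$ a prime, $H$ a strongly $p$-embedded subgroup of $G$, and set $\overline{G} = G/O_{p'}(G)$. Assume $\overline{H} \ne \overline{G}$ (where $\overline{H}$ is the image of $H$). Then $\overline{H}$ is a strongly $p$-embedded subgroup of $\overline{G}$. -/
/-- `O_{p'}(G)`, the largest normal `p'`-subgroup of `G`. -/
def pPrimeCore (p : ℕ) (G : Type*) [Group G] : Subgroup G :=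
  sSup {N : Subgroup G | N.Normal ∧ ¬ (p ∣ Nat.card N)}


theorem conjSub_of_normal {G : Type*} [Group G] (g : G) {N : Subgroup G} (hN : N.Normal) :
    conjSub g N = N := by
  apply le_antisymm
  · rintro x ⟨n, hn, rfl⟩
    exact hN.conj_mem n hn g
  · intro x hx
    exact ⟨g⁻¹ * x * g, by simpa using hN.conj_mem x hx g⁻¹,
      by simp [MulAut.conj_apply]; group⟩

theorem sSup_normal {G : Type*} [Group G] (S : Set (Subgroup G)) (hS : ∀ N ∈ S, N.Normal) :
    (sSup S).Normal := by
  constructor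
  intro n hn g
  have hmap : conjSub g (sSup S) = sSup S := by
    unfold conjSub
    rw [(Subgroup.gc_map_comap (MulAut.conj g).toMonoidHom).l_sSup]
    have h : ∀ N ∈ S, Subgroup.map (MulAut.conj g).toMonoidHom N = N := fun N hN =>
      conjSub_of_normal g (hS N hN)
    calc (⨆ N ∈ S, Subgroup.map (MulAut.conj g).toMonoidHom N) = ⨆ N ∈ S, N := by
          apply le_antisymm
          · exact iSup₂_le fun N hN => (h N hN).le.trans (le_iSup₂ (f := fun N _ => N) N hN)
          · exact iSup₂_le fun N hN => (h N hN).ge.trans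
              (le_iSup₂ (f := fun N _ => Subgroup.map (MulAut.conj g).toMonoidHom N) N hN)
      _ = sSup S := by rw [sSup_eq_iSup]
  have hmem : (MulAut.conj g).toMonoidHom n ∈ conjSub g (sSup S) :=
    Subgroup.mem_map_of_mem _ hn
  rw [hmap] at hmem
  simpa [MulAut.conj_apply] using hmem

instance pPrimeCore_normal (p : ℕ) (G : Type*) [Group G] : (pPrimeCore p G).Normal :=
  sSup_normal _ (fun _ h => h.1)

open Subgroup Pointwise

lemma aux_card_subgroupOf_dvd {G : Type*} [Group G] [Finite G] (H K : Subgroup G) :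
    Nat.card (H.subgroupOf K) ∣ Nat.card H := by
  have h1 : Nat.card (H.subgroupOf K) = Nat.card ↥(H ⊓ K) := by
    rw [← inf_subgroupOf_right]
    exact Nat.card_congr (Subgroup.subgroupOfEquivOfLe inf_le_right).toEquiv
  rw [h1]
  exact Subgroup.card_dvd_of_le inf_le_left

lemma aux_sup_pprime {G : Type*} [Group G] [Finite G] {p : ℕ} (hp : p.Prime) {M N : Subgroup G}
    (hNn : N.Normal) (hM : ¬ p ∣ Nat.card M) (hN : ¬ p ∣ Nat.card N) :
    ¬ p ∣ Nat.card ↥(M ⊔ N) := by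
  haveI := hNn
  intro hdvd
  have h1 : Nat.card ↥(M ⊔ N)
      = Nat.card (↥(M ⊔ N) ⧸ N.subgroupOf (M ⊔ N)) * Nat.card (N.subgroupOf (M ⊔ N)) :=
    Subgroup.card_eq_card_quotient_mul_card_subgroup _
  rw [h1] at hdvd
  rcases hp.dvd_mul.mp hdvd with h | h
  · have e := QuotientGroup.quotientInfEquivProdNormalQuotient M N
    have h2 : Nat.card (↥(M ⊔ N) ⧸ N.subgroupOf (M ⊔ N)) = Nat.card (↥M ⧸ N.subgroupOf M) :=
      Nat.card_congr e.toEquiv.symm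
    rw [h2] at h
    exact hM (h.trans (Subgroup.card_quotient_dvd_card _))
  · exact hN (h.trans (aux_card_subgroupOf_dvd N (M ⊔ N)))

lemma pPrimeCore_not_dvd {G : Type*} [Group G] [Finite G] {p : ℕ} (hp : p.Prime) :
    ¬ p ∣ Nat.card (pPrimeCore p G) := by
  have hfin : Set.Finite {N : Subgroup G | N.Normal ∧ ¬ (p ∣ Nat.card N)} := Set.toFinite _
  have main : (sSup {N : Subgroup G | N.Normal ∧ ¬ (p ∣ Nat.card N)}).Normal ∧
      ¬ p ∣ Nat.card ↥(sSup {N : Subgroup G | N.Normal ∧ ¬ (p ∣ Nat.card N)}) := by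
    refine Set.Finite.induction_on_subset (motive := fun (t : Set (Subgroup G)) _ => (sSup t).Normal ∧ ¬ p ∣ Nat.card ↥(sSup t)) _ hfin ?_ ?_
    · rw [sSup_empty]
      exact ⟨inferInstance, by rw [Subgroup.card_bot]; exact hp.not_dvd_one⟩
    · intro a s ha _ _ ih
      rw [sSup_insert]
      haveI := ha.1; haveI := ih.1
      exact ⟨Subgroup.sup_normal a (sSup s), aux_sup_pprime hp ih.1 ha.2 ih.2⟩
  exact main.2

lemma aux_key_lift {G : Type*} [Group G] [Finite G] {p : ℕ} (hp : p.Prime)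
    (N : Subgroup G) [N.Normal] (hN : ¬ p ∣ Nat.card N) {S : Subgroup G} {xb : G ⧸ N}
    (hxb : xb ∈ Subgroup.map (QuotientGroup.mk' N) S) (hord : orderOf xb = p) :
    ∃ x ∈ S, orderOf x = p ∧ (QuotientGroup.mk' N) x ∈ zpowers xb ∧
      (QuotientGroup.mk' N) x ≠ 1 := by
  obtain ⟨h, hhS, hπh⟩ := hxb
  set π := QuotientGroup.mk' N
  have hn0 : orderOf h ≠ 0 := (orderOf_pos h).ne'
  have hpn : p ∣ orderOf h := by rw [← hord, ← hπh]; exact orderOf_map_dvd π h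
  set n := orderOf h with hn
  set a := n.factorization p with ha
  set q := n / p ^ a with hq
  have hqdvd : q ∣ n := Nat.ordCompl_dvd n p
  have hpq : ¬ p ∣ q := Nat.not_dvd_ordCompl hp hn0
  have ha1 : 1 ≤ a := (Nat.Prime.factorization_pos_of_dvd hp hn0 hpn)
  set x := h ^ q with hx
  have hordx : orderOf x = p ^ a := by
    rw [hx, orderOf_pow, ← hn, Nat.gcd_eq_right hqdvd, hq,
      Nat.div_div_self (Nat.ordProj_dvd n p) hn0]
  have hπx : π x = xb ^ q := by rw [hx, map_pow, hπh]
  have hordπx : orderOf (π x) = p := by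
    rw [hπx, orderOf_pow, hord,
      Nat.Coprime.gcd_eq_one ((Nat.Prime.coprime_iff_not_dvd hp).mpr hpq), Nat.div_one]
  have hπx1 : π x ≠ 1 := by
    intro h1
    rw [h1, orderOf_one] at hordπx
    exact hp.one_lt.ne' hordπx.symm
  have hxpN : x ^ p ∈ N := by
    have : π (x ^ p) = 1 := by rw [map_pow, ← hordπx, pow_orderOf_eq_one]
    rwa [← QuotientGroup.ker_mk' N, MonoidHom.mem_ker]
  have hordxp : orderOf (x ^ p) ∣ Nat.card N := by
    have hle : zpowers (x ^ p) ≤ N := zpowers_le.mpr hxpN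
    have := Subgroup.card_dvd_of_le hle
    rwa [Nat.card_zpowers] at this
  have ha2 : a = 1 := by
    by_contra hane
    have ha2' : 2 ≤ a := lt_of_le_of_ne ha1 (Ne.symm hane)
    have : orderOf (x ^ p) = p ^ (a - 1) := by
      rw [orderOf_pow, hordx, Nat.gcd_eq_right (dvd_pow_self p (by omega))]
      have hpa : p ^ a = p ^ (a - 1) * p := by rw [← pow_succ]; congr 1; omega
      rw [hpa, Nat.mul_div_cancel _ hp.pos]
    rw [this] at hordxp
    exact hN (dvd_trans (dvd_pow_self p (by omega)) hordxp)
  exact ⟨x, pow_mem hhS q, by rw [hordx, ha2, pow_one],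
    by rw [hπx]; exact pow_mem (mem_zpowers xb) q, hπx1⟩

lemma aux_map_conjSub {G : Type*} [Group G] {Q : Type*} [Group Q] (π : G →* Q) (g : G)
    (H : Subgroup G) :
    Subgroup.map π (conjSub g H) = conjSub (π g) (Subgroup.map π H) := by
  unfold conjSub
  rw [Subgroup.map_map, Subgroup.map_map]
  congr 1
  ext a
  simp [MulAut.conj_apply]

theorem quotient_strongly_p_embedded {G : Type*} [Group G] [Finite G]
    (p : ℕ) (hp : p.Prime) (H : Subgroup G) (hH : IsStronglyPEmbedded p H)
    (hne : Subgroup.map (QuotientGroup.mk' (pPrimeCore p G)) H ≠ ⊤) :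
    IsStronglyPEmbedded p (Subgroup.map (QuotientGroup.mk' (pPrimeCore p G)) H) := by
  haveI : Fact p.Prime := ⟨hp⟩
  haveI : (pPrimeCore p G).Normal := pPrimeCore_normal p G
  set N := pPrimeCore p G with hNdef
  have hN : ¬ p ∣ Nat.card N := pPrimeCore_not_dvd hp
  set π := QuotientGroup.mk' N with hπdef
  refine ⟨hne, ?_, ?_⟩
  · -- p ∣ card of image
    have hker : (π.comp H.subtype).ker = N.subgroupOf H := by
      ext a
      simp only [MonoidHom.mem_ker, MonoidHom.comp_apply, Subgroup.mem_subgroupOf]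
      rw [← MonoidHom.mem_ker, QuotientGroup.ker_mk' N]
      rfl
    have hrange : (π.comp H.subtype).range = Subgroup.map π H := by
      rw [MonoidHom.range_comp, Subgroup.range_subtype]
    have hcard : Nat.card ↥H = Nat.card (Subgroup.map π H) * Nat.card (N.subgroupOf H) := by
      have h1 := Subgroup.card_eq_card_quotient_mul_card_subgroup (π.comp H.subtype).ker
      have h2 : Nat.card (↥H ⧸ (π.comp H.subtype).ker) = Nat.card (Subgroup.map π H) := by
        rw [← hrange]
        exact Nat.card_congr (QuotientGroup.quotientKerEquivRange _).toEquiv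
      rw [h1, h2, hker]
    have hdvd := hH.2.1
    rw [hcard] at hdvd
    rcases hp.dvd_mul.mp hdvd with h | h
    · exact h
    · exact absurd (h.trans (aux_card_subgroupOf_dvd N H)) hN
  · intro gb hgb hdvd
    obtain ⟨g, rfl⟩ := QuotientGroup.mk'_surjective N gb
    obtain ⟨x0, hx0⟩ := exists_prime_orderOf_dvd_card'
      (G := ↥(Subgroup.map π H ⊓ conjSub (π g) (Subgroup.map π H))) p hdvd
    set xb : G ⧸ N := (x0 : G ⧸ N) with hxbdef
    have hxbord : orderOf xb = p := by
      rw [← hx0]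
      exact orderOf_injective _ (Subgroup.subtype_injective _) x0
    have hxbH : xb ∈ Subgroup.map π H := x0.2.1
    have hxbC : xb ∈ Subgroup.map π (conjSub g H) := by
      rw [aux_map_conjSub]; exact x0.2.2
    obtain ⟨x1, hx1H, hx1ord, hx1z, hx1ne⟩ := aux_key_lift hp N hN hxbH hxbord
    obtain ⟨y, hyC, hyord, hyz, hyne⟩ := aux_key_lift hp N hN hxbC hxbord
    have hπx1ord : orderOf (π x1) = p := by
      rcases hp.eq_one_or_self_of_dvd (orderOf (π x1))
        (by rw [← hx1ord]; exact orderOf_map_dvd π x1) with h | h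
      · exact absurd (orderOf_eq_one_iff.mp h) hx1ne
      · exact h
    have hzeq : zpowers (π x1) = zpowers xb := by
      apply Subgroup.eq_of_le_of_card_ge (zpowers_le.mpr hx1z)
      rw [Nat.card_zpowers, Nat.card_zpowers, hπx1ord, hxbord]
    have hymem : π y ∈ zpowers (π x1) := hzeq ▸ hyz
    obtain ⟨k, hk⟩ := Subgroup.mem_zpowers_iff.mp hymem
    set c : ℕ := (k % (p : ℤ)).toNat with hc
    have hcast : ((c : ℤ)) = k % (p : ℤ) :=
      Int.toNat_of_nonneg (Int.emod_nonneg k (by exact_mod_cast hp.ne_zero))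
    set x' := x1 ^ c with hx'
    have hπx' : π x' = π y := by
      rw [hx', map_pow]
      calc (π x1) ^ c = (π x1) ^ (c : ℤ) := (zpow_natCast _ c).symm
        _ = (π x1) ^ (k % (p : ℤ)) := by rw [hcast]
        _ = (π x1) ^ k := by rw [← hπx1ord]; exact zpow_mod_orderOf (π x1) k
        _ = π y := hk
    have hx'H : x' ∈ H := pow_mem hx1H c
    have hx'ne : x' ≠ 1 := by
      intro h1; rw [h1, map_one] at hπx'; exact hyne hπx'.symm
    have hx'ord : orderOf x' = p := by
      refine orderOf_eq_prime ?_ hx'ne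
      rw [hx', ← pow_mul, mul_comm, pow_mul, ← hx1ord, pow_orderOf_eq_one, one_pow]
    set K := zpowers x' ⊔ N with hK
    have hx'K : x' ∈ K := Subgroup.mem_sup_left (mem_zpowers x')
    have hyne1 : y ≠ 1 := fun h1 => hyne (by rw [h1, map_one])
    have hyK : y ∈ K := by
      have hyx : y * x'⁻¹ ∈ N := by
        rw [← QuotientGroup.ker_mk' N, MonoidHom.mem_ker, map_mul, map_inv, hπx',
          mul_inv_cancel]
      have : y = (y * x'⁻¹) * x' := by group
      rw [this]
      exact mul_mem (Subgroup.mem_sup_right hyx) hx'K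
    -- cardinality of K
    have hcardP : Nat.card (zpowers x') = p := by rw [Nat.card_zpowers, hx'ord]
    have hsub1 : Nat.card (N.subgroupOf (zpowers x')) = 1 := by
      have hd1 : Nat.card (N.subgroupOf (zpowers x')) ∣ p := by
        have := Subgroup.card_subgroup_dvd_card (N.subgroupOf (zpowers x'))
        rwa [hcardP] at this
      rcases hp.eq_one_or_self_of_dvd _ hd1 with h | h
      · exact h
      · exact absurd (h ▸ aux_card_subgroupOf_dvd N (zpowers x')) hN
    have hquotP : Nat.card (↥(zpowers x') ⧸ N.subgroupOf (zpowers x')) = p := by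
      have := Subgroup.card_eq_card_quotient_mul_card_subgroup (N.subgroupOf (zpowers x'))
      rw [hcardP, hsub1, mul_one] at this
      exact this.symm
    have hcardK : Nat.card ↥K = p * Nat.card (N.subgroupOf K) := by
      have h1 := Subgroup.card_eq_card_quotient_mul_card_subgroup (N.subgroupOf K)
      have h2 : Nat.card (↥K ⧸ N.subgroupOf K)
          = Nat.card (↥(zpowers x') ⧸ N.subgroupOf (zpowers x')) :=
        Nat.card_congr (QuotientGroup.quotientInfEquivProdNormalQuotient (zpowers x') N).toEquiv.symm
      rw [h1, h2, hquotP]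
    have hNK : ¬ p ∣ Nat.card (N.subgroupOf K) :=
      fun h => hN (h.trans (aux_card_subgroupOf_dvd N K))
    have hfactK : (Nat.card ↥K).factorization p = 1 := by
      rw [hcardK, Nat.factorization_mul hp.ne_zero Nat.card_pos.ne', Finsupp.add_apply,
        hp.factorization_self, Nat.factorization_eq_zero_of_not_dvd hNK]
    -- Sylow argument inside K
    set x'' : ↥K := ⟨x', hx'K⟩ with hx''
    set y'' : ↥K := ⟨y, hyK⟩ with hy''
    have hx''ord : orderOf x'' = p := by
      rw [← hx'ord]
      exact (orderOf_injective K.subtype (Subgroup.subtype_injective K) x'').symm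
    have hy''ord : orderOf y'' = p := by
      rw [← hyord]
      exact (orderOf_injective K.subtype (Subgroup.subtype_injective K) y'').symm
    obtain ⟨Q', hQ'⟩ := IsPGroup.exists_le_sylow
      (IsPGroup.of_card (by rw [Nat.card_zpowers, hx''ord, pow_one]) :
        IsPGroup p (zpowers x''))
    obtain ⟨Q, hQ⟩ := IsPGroup.exists_le_sylow
      (IsPGroup.of_card (by rw [Nat.card_zpowers, hy''ord, pow_one]) :
        IsPGroup p (zpowers y''))
    have hcardQ' : Nat.card ↥(Q' : Subgroup ↥K) = p := by
      rw [Sylow.card_eq_multiplicity, hfactK, pow_one]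
    have hcardQ : Nat.card ↥(Q : Subgroup ↥K) = p := by
      rw [Sylow.card_eq_multiplicity, hfactK, pow_one]
    have hQ'eq : zpowers x'' = (Q' : Subgroup ↥K) :=
      Subgroup.eq_of_le_of_card_ge hQ' (by rw [hcardQ', Nat.card_zpowers, hx''ord])
    have hQeq : zpowers y'' = (Q : Subgroup ↥K) :=
      Subgroup.eq_of_le_of_card_ge hQ (by rw [hcardQ, Nat.card_zpowers, hy''ord])
    obtain ⟨m, hm⟩ := MulAction.exists_smul_eq ↥K Q' Q
    have hsmul : MulAut.conj m • (zpowers x'') = zpowers y'' := by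
      rw [hQ'eq, hQeq, ← Sylow.coe_subgroup_smul, hm]
    have hy''mem : y'' ∈ MulAut.conj m • (zpowers x'') := by rw [hsmul]; exact mem_zpowers y''
    obtain ⟨s, hs, hconj⟩ := (Subgroup.mem_smul_pointwise_iff_exists y'' (MulAut.conj m)
      (zpowers x'')).mp hy''mem
    obtain ⟨j, hj⟩ := Subgroup.mem_zpowers_iff.mp hs
    -- y'' = m * x''^j * m⁻¹
    have hyconj : y'' = m * x'' ^ j * m⁻¹ := by
      rw [← hconj, ← hj, MulAut.smul_def, MulAut.conj_apply]
    -- translate to G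
    set mm : G := (m : G) with hmm
    have hyG : y = mm * x' ^ j * mm⁻¹ := by
      have := congrArg (Subtype.val) hyconj
      simpa [hx'', hy'', hmm] using this
    -- convert j to nat power
    set c2 : ℕ := (j % (p : ℤ)).toNat with hc2
    have hcast2 : ((c2 : ℤ)) = j % (p : ℤ) :=
      Int.toNat_of_nonneg (Int.emod_nonneg j (by exact_mod_cast hp.ne_zero))
    set w : G := x' ^ c2 with hw
    have hwj : w = x' ^ j := by
      rw [hw]
      calc x' ^ c2 = x' ^ (c2 : ℤ) := (zpow_natCast _ c2).symm
        _ = x' ^ (j % (p : ℤ)) := by rw [hcast2]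
        _ = x' ^ j := by rw [← hx'ord]; exact zpow_mod_orderOf x' j
    have hyw : y = mm * w * mm⁻¹ := by rw [hwj]; exact hyG
    have hwne : w ≠ 1 := by
      intro h1
      rw [h1, mul_one, mul_inv_cancel] at hyw
      exact hyne (by rw [hyw, map_one])
    have hword : orderOf w = p := by
      refine orderOf_eq_prime ?_ hwne
      rw [hw, ← pow_mul, mul_comm, pow_mul, ← hx'ord, pow_orderOf_eq_one, one_pow]
    have hwH : w ∈ H := pow_mem hx'H c2
    -- w ∈ conjSub (mm⁻¹ * g) H
    have hwC : w ∈ conjSub (mm⁻¹ * g) H := by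
      obtain ⟨h0, hh0, hh0eq⟩ := hyC
      refine ⟨h0, hh0, ?_⟩
      have hh0eq' : g * h0 * g⁻¹ = y := hh0eq
      show (mm⁻¹ * g) * h0 * (mm⁻¹ * g)⁻¹ = w
      have : w = mm⁻¹ * y * mm := by rw [hyw]; group
      rw [this, ← hh0eq']
      group
    have hpdvd : p ∣ Nat.card ↥(H ⊓ conjSub (mm⁻¹ * g) H) := by
      have hle : zpowers w ≤ H ⊓ conjSub (mm⁻¹ * g) H :=
        le_inf (zpowers_le.mpr hwH) (zpowers_le.mpr hwC)
      have := Subgroup.card_dvd_of_le hle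
      rw [Nat.card_zpowers, hword] at this
      exact this
    have hmem : mm⁻¹ * g ∈ H := by
      by_contra hcon
      exact hH.2.2 _ hcon hpdvd
    -- final contradiction
    apply hgb
    have hmmK : mm ∈ K := m.2
    have hπmm : π mm ∈ Subgroup.map π H := by
      have h1 : π mm ∈ Subgroup.map π K := Subgroup.mem_map_of_mem π hmmK
      have h2 : Subgroup.map π K ≤ Subgroup.map π H := by
        rw [hK, Subgroup.map_sup]
        apply sup_le
        · rw [MonoidHom.map_zpowers]
          exact zpowers_le.mpr (Subgroup.mem_map_of_mem π hx'H)
        · show Subgroup.map (QuotientGroup.mk' N) N ≤ _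
          rw [QuotientGroup.map_mk'_self]
          exact bot_le
      exact h2 h1
    have : π g = π mm * π (mm⁻¹ * g) := by rw [← map_mul]; congr 1; group
    rw [this]
    exact mul_mem hπmm (Subgroup.mem_map_of_mem π hmem)
end

section
/- Let $G$ be a finite group, $p$ a prime, and $H$ a strongly $p$-embedded subgroup of $G$ with $O_{p'}(G) = 1$. Then $F(G) = 1$ and $F^*(G) = E(G)$ is a non-abelian simple group. -/
/-- The Fitting subgroup: the largest normal nilpotent subgroup. -/
def fittingSubgroup (G : Type*) [Group G] : Subgroup G :=
  sSup {N : Subgroup G | N.Normal ∧ Group.IsNilpotent N}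

/-- A subnormal subgroup: there is a chain `K ⊴ ⋯ ⊴ G`. -/
def IsSubnormal {G : Type*} [Group G] (K : Subgroup G) : Prop :=
  Relation.ReflTransGen
    (fun A B : Subgroup G => A ≤ B ∧ ∀ b ∈ B, ∀ a ∈ A, b * a * b⁻¹ ∈ A) K ⊤

/-- A quasisimple subgroup: perfect and simple modulo its centre. -/
def IsQuasisimple {G : Type*} [Group G] (L : Subgroup G) : Prop :=
  commutator ↥L = ⊤ ∧ IsSimpleGroup (↥L ⧸ Subgroup.center ↥L)

/-- A component of `G`: a subnormal quasisimple subgroup. -/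
def IsComponent {G : Type*} [Group G] (L : Subgroup G) : Prop :=
  IsSubnormal L ∧ IsQuasisimple L

/-- `E(G)`, the layer of `G`: the subgroup generated by the components. -/
def layerSub (G : Type*) [Group G] : Subgroup G :=
  sSup {L : Subgroup G | IsComponent L}

/-- `F^*(G) = F(G) E(G)`, the generalized Fitting subgroup. -/
def genFitting (G : Type*) [Group G] : Subgroup G :=
  fittingSubgroup G ⊔ layerSub G

namespace SPEAux

variable {G : Type*} [Group G]

theorem mem_conjSub {g x : G} {K : Subgroup G} : x ∈ conjSub g K ↔ g⁻¹ * x * g ∈ K := by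
  simp only [conjSub, Subgroup.mem_map, MulEquiv.coe_toMonoidHom, MulAut.conj_apply]
  constructor
  · rintro ⟨y, hy, rfl⟩
    have e : g⁻¹ * (g * y * g⁻¹) * g = y := by group
    rwa [e]
  · intro h
    exact ⟨_, h, by group⟩

theorem conjSub_conjSub (g h : G) (K : Subgroup G) :
    conjSub g (conjSub h K) = conjSub (g * h) K := by
  ext x
  simp only [mem_conjSub]
  rw [show h⁻¹ * (g⁻¹ * x * g) * h = (g * h)⁻¹ * x * (g * h) by group]

theorem conjSub_one (K : Subgroup G) : conjSub 1 K = K := by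
  ext x; simp [mem_conjSub]

theorem card_conjSub (g : G) (K : Subgroup G) : Nat.card (conjSub g K) = Nat.card K :=
  (Nat.card_congr (Subgroup.equivMapOfInjective K _ (MulAut.conj g).injective).toEquiv).symm

theorem conjSub_mono (g : G) {K K' : Subgroup G} (h : K ≤ K') : conjSub g K ≤ conjSub g K' := by
  intro x hx
  rw [mem_conjSub] at hx ⊢
  exact h hx

theorem conjSub_inf (g : G) (A B : Subgroup G) :
    conjSub g (A ⊓ B) = conjSub g A ⊓ conjSub g B := by
  ext x; simp [mem_conjSub, Subgroup.mem_inf]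

theorem conjSub_eq_of_normal {N : Subgroup G} (hN : N.Normal) (g : G) : conjSub g N = N := by
  ext x
  rw [mem_conjSub]
  constructor
  · intro h
    have := hN.conj_mem _ h g
    have e : g * (g⁻¹ * x * g) * g⁻¹ = x := by group
    rwa [e] at this
  · intro h
    have := hN.conj_mem _ h g⁻¹
    simpa using this

theorem normal_of_conjSub_le {N : Subgroup G} (h : ∀ g : G, conjSub g N ≤ N) : N.Normal := by
  constructor
  intro n hn g
  refine h g (mem_conjSub.mpr ?_)
  have e : g⁻¹ * (g * n * g⁻¹) * g = n := by group
  rwa [e]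

theorem normal_sup {A B : Subgroup G} (hA : A.Normal) (hB : B.Normal) : (A ⊔ B).Normal := by
  refine normal_of_conjSub_le fun g => ?_
  have : conjSub g (A ⊔ B) = conjSub g A ⊔ conjSub g B := Subgroup.map_sup _ _ _
  rw [this, conjSub_eq_of_normal hA, conjSub_eq_of_normal hB]

theorem commute_of_inf_eq_bot {T A B : Subgroup G} (hA : A ≤ T) (hB : B ≤ T)
    (hAn : ∀ t ∈ T, ∀ a ∈ A, t * a * t⁻¹ ∈ A) (hBn : ∀ t ∈ T, ∀ b ∈ B, t * b * t⁻¹ ∈ B)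
    (h : A ⊓ B = ⊥) : ∀ a ∈ A, ∀ b ∈ B, a * b = b * a := by
  intro a ha b hb
  have h1 : a * b * a⁻¹ * b⁻¹ ∈ B := by
    have h1' := hBn a (hA ha) b hb
    have := mul_mem h1' (inv_mem hb)
    exact this
  have h2 : a * b * a⁻¹ * b⁻¹ ∈ A := by
    have h2' := hAn b (hB hb) a⁻¹ (inv_mem ha)
    have h2'' := mul_mem ha h2'
    have e : a * (b * a⁻¹ * b⁻¹) = a * b * a⁻¹ * b⁻¹ := by group
    rwa [e] at h2''
  have hmem : a * b * a⁻¹ * b⁻¹ ∈ A ⊓ B := ⟨h2, h1⟩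
  rw [h, Subgroup.mem_bot] at hmem
  have : a * b * a⁻¹ = b := by
    rw [mul_inv_eq_one] at hmem
    exact hmem
  rw [mul_inv_eq_iff_eq_mul] at this
  exact this

theorem card_sup_dvd {G : Type*} [Group G] [Finite G] (X Y : Subgroup G) [hY : Y.Normal] :
    Nat.card ↥(X ⊔ Y) ∣ Nat.card X * Nat.card Y := by
  have h1 := Subgroup.card_eq_card_quotient_mul_card_subgroup (Y.subgroupOf (X ⊔ Y))
  have h2 : Nat.card (Y.subgroupOf (X ⊔ Y)) = Nat.card Y :=
    Nat.card_congr (Subgroup.subgroupOfEquivOfLe le_sup_right).toEquiv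
  have h3 : Nat.card (↥(X ⊔ Y) ⧸ Y.subgroupOf (X ⊔ Y)) = Nat.card (↥X ⧸ Y.subgroupOf X) :=
    (Nat.card_congr (QuotientGroup.quotientInfEquivProdNormalQuotient X Y).toEquiv).symm
  have h4 : Nat.card (↥X ⧸ Y.subgroupOf X) ∣ Nat.card X := Subgroup.card_quotient_dvd_card _
  rw [h1, h2, h3]
  exact mul_dvd_mul_right h4 _

theorem not_dvd_card_iSup {G : Type*} [Group G] [Finite G] {p : ℕ} (hp : p.Prime)
    {ι : Type*} [Finite ι] (f : ι → Subgroup G) (hn : ∀ i, (f i).Normal)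
    (hc : ∀ i, ¬ p ∣ Nat.card (f i)) : ¬ p ∣ Nat.card ↥(⨆ i, f i) := by
  letI := Fintype.ofFinite ι
  have key : ∀ s : Finset ι, ¬ p ∣ Nat.card ↥(s.sup f) ∧ (s.sup f).Normal := by
    intro s
    refine Finset.cons_induction_on s ?_ ?_
    · constructor
      · rw [Finset.sup_empty, Subgroup.card_bot]
        exact Nat.Prime.not_dvd_one hp
      · rw [Finset.sup_empty]; infer_instance
    · intro a s ha ih
      rw [Finset.sup_cons]
      haveI := ih.2
      constructor
      · intro hdvd
        have hd2 : p ∣ Nat.card (f a) * Nat.card ↥(s.sup f) :=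
          hdvd.trans (card_sup_dvd (f a) (s.sup f))
        rcases (Nat.Prime.dvd_mul hp).mp hd2 with h | h
        · exact hc a h
        · exact ih.1 h
      · exact normal_sup (hn a) ih.2
  have huniv : (⨆ i, f i) = Finset.univ.sup f := by
    apply le_antisymm
    · exact iSup_le fun i => Finset.le_sup (Finset.mem_univ i)
    · exact Finset.sup_le fun i _ => le_iSup f i
  rw [huniv]
  exact (key Finset.univ).1

theorem isSimpleGroup_of_mulEquiv {A B : Type*} [Group A] [Group B] [IsSimpleGroup A]
    (e : A ≃* B) : IsSimpleGroup B := by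
  haveI : Nontrivial B := e.symm.toEquiv.nontrivial
  refine ⟨fun N hN => ?_⟩
  have hN' : (N.comap e.toMonoidHom).Normal := hN.comap _
  have hback : (N.comap e.toMonoidHom).map e.toMonoidHom = N :=
    Subgroup.map_comap_eq_self_of_surjective (f := e.toMonoidHom) e.surjective N
  rcases IsSimpleGroup.eq_bot_or_eq_top_of_normal _ hN' with h | h
  · left
    rw [← hback, h, Subgroup.map_bot]
  · right
    rw [← hback, h, ← MonoidHom.range_eq_map, MonoidHom.range_eq_top]
    exact e.surjective

theorem centralizer_normal {M : Subgroup G} (hM : M.Normal) :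
    (Subgroup.centralizer (M : Set G)).Normal := by
  constructor
  intro c hc g
  rw [Subgroup.mem_centralizer_iff] at hc ⊢
  intro m hm
  have hm' : g⁻¹ * m * g ∈ M := by simpa using hM.conj_mem m hm g⁻¹
  have hcm := hc _ hm'
  calc m * (g * c * g⁻¹) = g * ((g⁻¹ * m * g) * c) * g⁻¹ := by group
    _ = g * (c * (g⁻¹ * m * g)) * g⁻¹ := by rw [hcm]
    _ = (g * c * g⁻¹) * m := by group

end SPEAux

section Main

open SPEAux Pointwise commutatorElement

theorem genFitting_simple_of_strongly_p_embedded {G : Type*} [Group G] [Finite G]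
    (p : ℕ) (hp : p.Prime) (H : Subgroup G) (hH : IsStronglyPEmbedded p H)
    (hcore : pPrimeCore p G = ⊥) :
    fittingSubgroup G = ⊥ ∧ genFitting G = layerSub G ∧
      IsSimpleGroup ↥(layerSub G) ∧ ∃ a b : ↥(layerSub G), a * b ≠ b * a := by
  classical
  obtain ⟨hHtop, hHp, hHint⟩ := hH
  haveI : Fact p.Prime := ⟨hp⟩
  haveI : Finite (Subgroup G) := Finite.of_injective _ (SetLike.coe_injective (A := Subgroup G))
  haveI : Finite (Sylow p G) :=
    Finite.of_injective (fun P : Sylow p G => (P : Subgroup G))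
      (fun P Q h => Sylow.ext h)
  -- no normal subgroup of order divisible by p inside H
  have SE2 : ∀ N : Subgroup G, N.Normal → N ≤ H → p ∣ Nat.card N → False := by
    intro N hNn hNH hNp
    obtain ⟨g, hg⟩ : ∃ g : G, g ∉ H := by
      by_contra hcon
      push_neg at hcon
      exact hHtop (top_unique fun x _ => hcon x)
    refine hHint g hg (hNp.trans (Subgroup.card_dvd_of_le (le_inf hNH ?_)))
    intro x hx
    refine mem_conjSub.mpr (hNH ?_)
    simpa using hNn.conj_mem x hx g⁻¹
  -- every nontrivial normal subgroup has order divisible by p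
  have pdvd_of_normal : ∀ N : Subgroup G, N.Normal → N ≠ ⊥ → p ∣ Nat.card N := by
    intro N hNn hNb
    by_contra hnd
    refine hNb (le_bot_iff.mp ?_)
    have hle : N ≤ pPrimeCore p G := le_sSup ⟨hNn, hnd⟩
    rwa [hcore] at hle
  -- normalizers of p-divisible subgroups of H lie in H
  have SE1 : ∀ P : Subgroup G, P ≤ H → p ∣ Nat.card P → Subgroup.normalizer (P : Set G) ≤ H := by
    intro P hPH hPp g hg
    by_contra hgH
    refine hHint g hgH (hPp.trans (Subgroup.card_dvd_of_le (le_inf hPH ?_)))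
    intro x hx
    refine mem_conjSub.mpr ?_
    have h1 := (Subgroup.mem_normalizer_iff''.mp hg x).mp hx
    exact hPH h1
  -- centralizers of order-p elements of H lie in H
  have SEcent : ∀ x : G, x ∈ H → orderOf x = p → Subgroup.centralizer {x} ≤ H := by
    intro x hxH hxp c hc
    have hcn : c ∈ Subgroup.normalizer ((Subgroup.zpowers x : Subgroup G) : Set G) := by
      have hcx : x * c = c * x := Subgroup.mem_centralizer_iff.mp hc x rfl
      have hcom : Commute c x := hcx.symm
      have hfix : ∀ k : ℤ, c * x ^ k * c⁻¹ = x ^ k := by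
        intro k
        rw [(hcom.zpow_right k).eq, mul_inv_cancel_right]
      rw [Subgroup.mem_normalizer_iff]
      intro h
      rw [Subgroup.mem_zpowers_iff, Subgroup.mem_zpowers_iff]
      constructor
      · rintro ⟨k, rfl⟩
        exact ⟨k, (hfix k).symm⟩
      · rintro ⟨k, hk⟩
        refine ⟨k, ?_⟩
        calc x ^ k = c⁻¹ * (c * x ^ k * c⁻¹) * c := by group
          _ = c⁻¹ * (x ^ k) * c := by rw [hfix k]
          _ = c⁻¹ * (c * h * c⁻¹) * c := by rw [hk]
          _ = h := by group
    refine SE1 (Subgroup.zpowers x) (Subgroup.zpowers_le.mpr hxH) ?_ hcn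
    rw [Nat.card_zpowers, hxp]
  -- Cauchy
  have cauchy : ∀ K : Subgroup G, p ∣ Nat.card K → ∃ x : G, x ∈ K ∧ orderOf x = p := by
    intro K hK
    obtain ⟨y, hy⟩ := exists_prime_orderOf_dvd_card' (G := ↥K) p hK
    exact ⟨↑y, y.2, (orderOf_injective K.subtype K.subtype_injective y).trans hy⟩
  -- H contains a full Sylow p-subgroup of G
  obtain ⟨x₀, hx₀H, hx₀p⟩ : ∃ x, x ∈ H ∧ orderOf x = p := cauchy H hHp
  have hQ : ∃ Q : Sylow p G, (Q : Subgroup G) ≤ H := by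
    set P𝒮 : Set (Subgroup G) := {P | P ≤ H ∧ IsPGroup p ↥P} with hP𝒮
    have hz : Subgroup.zpowers x₀ ∈ P𝒮 :=
      ⟨Subgroup.zpowers_le.mpr hx₀H,
        IsPGroup.of_card (by rw [Nat.card_zpowers, hx₀p, pow_one])⟩
    obtain ⟨P, hPin, hPmax⟩ :=
      Set.Finite.exists_maximalFor (fun P : Subgroup G => Nat.card P) P𝒮 (Set.toFinite _)
        ⟨_, hz⟩
    have hPmax' : ∀ P' ∈ P𝒮, Nat.card P' ≤ Nat.card P := by
      intro P' h'
      rcases le_or_gt (Nat.card P') (Nat.card P) with h | h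
      · exact h
      · exact hPmax h' h.le
    have hPp : p ∣ Nat.card P := by
      have h1 : p ≤ Nat.card P := by
        have := hPmax' _ hz
        rwa [Nat.card_zpowers, hx₀p] at this
      obtain ⟨n, hn⟩ := IsPGroup.iff_card.mp hPin.2
      rw [hn] at h1 ⊢
      match n with
      | 0 => exact absurd h1 (by simpa using hp.one_lt)
      | Nat.succ n => exact dvd_pow_self p (Nat.succ_ne_zero n)
    obtain ⟨Q, hPQ⟩ := hPin.2.exists_le_sylow
    refine ⟨Q, ?_⟩
    have hQP : (Q : Subgroup G) = P := by
      by_contra hne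
      have hlt : P < (Q : Subgroup G) := hPQ.lt_of_ne (Ne.symm hne)
      have hnil : Group.IsNilpotent ↥(Q : Subgroup G) := Q.2.isNilpotent
      have hPsub : P.subgroupOf ↑Q < ⊤ := by
        refine lt_top_iff_ne_top.mpr fun h => hlt.ne ?_
        exact le_antisymm hPQ (Subgroup.subgroupOf_eq_top.mp h)
      have hltn := normalizerCondition_of_isNilpotent (G := ↥(Q : Subgroup G)) _ hPsub
      obtain ⟨y, hy_n, hy_not⟩ := SetLike.exists_of_lt hltn
      set z := (y : G) with hzdef
      have hzQ : z ∈ (Q : Subgroup G) := y.2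
      have hzP : z ∉ P := fun h => hy_not (Subgroup.mem_subgroupOf.mpr h)
      have hznorm : z ∈ Subgroup.normalizer (P : Set G) := by
        rw [Subgroup.mem_normalizer_iff]
        intro h
        constructor
        · intro hh
          have hhQ : h ∈ (Q : Subgroup G) := hPQ hh
          have h1 : (⟨h, hhQ⟩ : ↥(Q : Subgroup G)) ∈ P.subgroupOf ↑Q :=
            Subgroup.mem_subgroupOf.mpr hh
          have h2 := (Subgroup.mem_normalizer_iff.mp hy_n _).mp h1
          exact Subgroup.mem_subgroupOf.mp h2
        · intro hh
          have hhQ : z * h * z⁻¹ ∈ (Q : Subgroup G) := hPQ hh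
          have hhQ' : h ∈ (Q : Subgroup G) := by
            have hmem := (Q : Subgroup G).mul_mem
              ((Q : Subgroup G).mul_mem (inv_mem hzQ) hhQ) hzQ
            have e : z⁻¹ * (z * h * z⁻¹) * z = h := by group
            rwa [e] at hmem
          have h1 : (⟨z * h * z⁻¹, hhQ⟩ : ↥(Q : Subgroup G)) ∈ P.subgroupOf ↑Q :=
            Subgroup.mem_subgroupOf.mpr hh
          have h2 : (⟨z * h * z⁻¹, hhQ⟩ : ↥(Q : Subgroup G)) =
              y * ⟨h, hhQ'⟩ * y⁻¹ := by
            apply Subtype.ext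
            simp [hzdef]
          rw [h2] at h1
          have h3 := (Subgroup.mem_normalizer_iff.mp hy_n _).mpr h1
          exact Subgroup.mem_subgroupOf.mp h3
      have hzH : z ∈ H := SE1 P hPin.1 hPp hznorm
      have hzpg : IsPGroup p (Subgroup.zpowers z) := by
        obtain ⟨k, hk⟩ := Q.2 ⟨z, hzQ⟩
        have hz1 : z ^ (p ^ k) = 1 := by
          have := congrArg (Subtype.val) hk
          simpa using this
        intro w
        obtain ⟨j, hj⟩ := Subgroup.mem_zpowers_iff.mp w.2
        refine ⟨k, ?_⟩
        apply Subtype.ext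
        have hcoe : ((w ^ p ^ k : _) : G) = (w : G) ^ (p ^ k) := by
          push_cast
          rfl
        rw [hcoe, ← hj]
        calc (z ^ j) ^ p ^ k = (z ^ (p ^ k : ℕ)) ^ j := by
              rw [← zpow_natCast (z ^ j), ← zpow_mul, mul_comm, zpow_mul, zpow_natCast]
          _ = 1 := by rw [hz1, one_zpow]
        
      have hRp : IsPGroup p ↥(P ⊔ Subgroup.zpowers z) :=
        IsPGroup.to_sup_of_normal_left' hPin.2 hzpg (Subgroup.zpowers_le.mpr hznorm)
      have hmem : P ⊔ Subgroup.zpowers z ∈ P𝒮 :=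
        ⟨sup_le hPin.1 (Subgroup.zpowers_le.mpr hzH), hRp⟩
      have hlt2 : Nat.card P < Nat.card ↥(P ⊔ Subgroup.zpowers z) := by
        have hle : P ≤ P ⊔ Subgroup.zpowers z := le_sup_left
        have hne2 : P ≠ P ⊔ Subgroup.zpowers z := by
          intro h
          exact hzP (h ▸ (le_sup_right (a := P) (Subgroup.mem_zpowers z)))
        have hle' := Nat.le_of_dvd Nat.card_pos (Subgroup.card_dvd_of_le hle)
        exact lt_of_le_of_ne hle' fun h => hne2 (Subgroup.eq_of_le_of_card_ge hle h.ge)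
      exact absurd (hPmax' _ hmem) (not_le.mpr hlt2)
    rw [hQP]
    exact hPin.1
  obtain ⟨Q, hQH⟩ := hQ
  -- conjugating p-elements into Q (hence into H)
  have conjQ : ∀ x : G, orderOf x = p → ∃ c : G, c * x * c⁻¹ ∈ (Q : Subgroup G) := by
    intro x hx
    have hxpg : IsPGroup p (Subgroup.zpowers x) :=
      IsPGroup.of_card (by rw [Nat.card_zpowers, hx, pow_one])
    obtain ⟨R, hR⟩ := hxpg.exists_le_sylow
    obtain ⟨c, hc⟩ := MulAction.exists_smul_eq G R Q
    refine ⟨c, ?_⟩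
    have hx1 : x ∈ (R : Subgroup G) := hR (Subgroup.mem_zpowers x)
    have h2 : MulAut.conj c • x ∈ MulAut.conj c • (R : Subgroup G) :=
      Subgroup.smul_mem_pointwise_smul x (MulAut.conj c) (R : Subgroup G) hx1
    rw [← Sylow.coe_subgroup_smul, hc] at h2
    simpa [MulAut.conj_apply] using h2
  have orderOf_conj : ∀ (x c : G), orderOf (c * x * c⁻¹) = orderOf x := by
    intro x c
    have := orderOf_injective (MulAut.conj c).toMonoidHom (MulAut.conj c).injective x
    simpa [MulAut.conj_apply] using this
  -- a minimal normal subgroup M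
  have hG1 : (⊤ : Subgroup G) ≠ ⊥ := by
    intro h
    have : x₀ ∈ (⊥ : Subgroup G) := h ▸ Subgroup.mem_top x₀
    rw [Subgroup.mem_bot] at this
    rw [this, orderOf_one] at hx₀p
    exact hp.one_lt.ne' hx₀p.symm
  obtain ⟨M, hMn, hMb, hMmin⟩ : ∃ M : Subgroup G, M.Normal ∧ M ≠ ⊥ ∧
      ∀ N : Subgroup G, N.Normal → N ≠ ⊥ → Nat.card M ≤ Nat.card N := by
    set s : Set ℕ := {n | ∃ N : Subgroup G, (N.Normal ∧ N ≠ ⊥) ∧ Nat.card N = n} with hs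
    have hsne : s.Nonempty := ⟨_, ⊤, ⟨⟨fun n _ g => Subgroup.mem_top _⟩, hG1⟩, rfl⟩
    obtain ⟨N, hN, hNcard⟩ := Nat.sInf_mem hsne
    exact ⟨N, hN.1, hN.2, fun N' h1 h2 => hNcard ▸ Nat.sInf_le ⟨N', ⟨h1, h2⟩, rfl⟩⟩
  have key_min : ∀ N : Subgroup G, N.Normal → N ≤ M → N = ⊥ ∨ N = M := by
    intro N hNn hNle
    rcases eq_or_ne N ⊥ with h | h
    · exact Or.inl h
    · right
      exact Subgroup.eq_of_le_of_card_ge hNle (hMmin N hNn h)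
  have hMp : p ∣ Nat.card M := pdvd_of_normal M hMn hMb
  -- normal p-subgroups are contained in H (hence trivial)
  have p_normal_bot : ∀ N : Subgroup G, N.Normal → IsPGroup p ↥N → p ∣ Nat.card N → False := by
    intro N hNn hNp hNd
    haveI := hNn
    refine SE2 N hNn ?_ hNd
    obtain ⟨R, hR⟩ := hNp.exists_le_sylow
    obtain ⟨c, hc⟩ := MulAction.exists_smul_eq G R Q
    have h1 : N ≤ (Q : Subgroup G) := by
      intro x hx
      have hx' : x ∈ MulAut.conj c • N := (Subgroup.Normal.conj_smul_eq_self c N).symm ▸ hx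
      rw [Subgroup.mem_pointwise_smul_iff_inv_smul_mem] at hx'
      have h2 : x ∈ MulAut.conj c • (R : Subgroup G) :=
        Subgroup.mem_pointwise_smul_iff_inv_smul_mem.mpr (hR hx')
      rw [← Sylow.coe_subgroup_smul, hc] at h2
      exact h2
    exact h1.trans hQH
  -- M is nonabelian
  have hMnab : ¬ (∀ x ∈ M, ∀ y ∈ M, x * y = y * x) := by
    intro habel
    let T : Subgroup G :=
      { carrier := {x : G | x ∈ M ∧ x ^ p = 1}
        one_mem' := ⟨M.one_mem, one_pow p⟩
        mul_mem' := by
          rintro a b ⟨haM, hap⟩ ⟨hbM, hbp⟩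
          refine ⟨M.mul_mem haM hbM, ?_⟩
          have hcom : Commute a b := habel a haM b hbM
          rw [hcom.mul_pow, hap, hbp, one_mul]
        inv_mem' := by
          rintro a ⟨haM, hap⟩
          exact ⟨M.inv_mem haM, by rw [inv_pow, hap, inv_one]⟩ }
    have hTn : T.Normal := by
      constructor
      rintro n ⟨hnM, hnp⟩ g
      refine ⟨hMn.conj_mem n hnM g, ?_⟩
      have h1 : (MulAut.conj g) n ^ p = (MulAut.conj g) (n ^ p) := (map_pow _ _ _).symm
      simp only [MulAut.conj_apply] at h1
      rw [h1, hnp]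
      simp
    have hTle : T ≤ M := fun x hx => hx.1
    obtain ⟨t, htM, htp⟩ := cauchy M hMp
    have htT : t ∈ T := ⟨htM, htp ▸ pow_orderOf_eq_one t⟩
    have ht1 : t ≠ 1 := by
      intro h
      rw [h, orderOf_one] at htp
      exact hp.one_lt.ne' htp.symm
    have hTb : T ≠ ⊥ := by
      intro h
      rw [h, Subgroup.mem_bot] at htT
      exact ht1 htT
    rcases key_min T hTn hTle with h | h
    · exact hTb h
    · refine p_normal_bot M hMn ?_ hMp
      intro g
      refine ⟨1, ?_⟩
      apply Subtype.ext
      have hgT : (g : G) ∈ T := by rw [h]; exact g.2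
      have : ((g ^ p ^ 1 : ↥M) : G) = (g : G) ^ p ^ 1 := by push_cast; rfl
      rw [this, pow_one, hgT.2]
      rfl
  -- the centralizer of M is trivial
  set C : Subgroup G := Subgroup.centralizer (M : Set G) with hCdef
  have hCn : C.Normal := centralizer_normal hMn
  have hCbot : C = ⊥ := by
    by_contra hC
    have hCp : p ∣ Nat.card C := pdvd_of_normal C hCn hC
    obtain ⟨x', hx'C, hx'p⟩ := cauchy C hCp
    obtain ⟨c, hcQ⟩ := conjQ x' hx'p
    set x := c * x' * c⁻¹ with hxdef
    have hxH : x ∈ H := hQH hcQ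
    have hxp : orderOf x = p := by rw [hxdef, orderOf_conj]; exact hx'p
    have hxC : x ∈ C := hCn.conj_mem x' hx'C c
    have hMle : M ≤ Subgroup.centralizer {x} := by
      intro m hm
      rw [Subgroup.mem_centralizer_iff]
      intro h hh
      rw [Set.mem_singleton_iff] at hh
      subst hh
      exact (Subgroup.mem_centralizer_iff.mp hxC m hm).symm
    exact SE2 M hMn (hMle.trans (SEcent x hxH hxp)) hMp
  -- trivial centre of M
  have hZM : Subgroup.center ↥M = ⊥ := by
    rw [eq_bot_iff]
    intro z hz
    rw [Subgroup.mem_bot]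
    have hzC : (z : G) ∈ C := by
      rw [hCdef, Subgroup.mem_centralizer_iff]
      intro h hh
      exact congrArg Subtype.val (Subgroup.mem_center_iff.mp hz ⟨h, hh⟩)
    rw [hCbot, Subgroup.mem_bot] at hzC
    exact Subtype.ext hzC
  -- M is the unique minimal normal subgroup
  have hMuniq : ∀ N : Subgroup G, N.Normal → N ≠ ⊥ → M ≤ N := by
    intro N hNn hNb
    have hDn : (N ⊓ M).Normal :=
      ⟨fun n hn g => ⟨hNn.conj_mem n hn.1 g, hMn.conj_mem n hn.2 g⟩⟩
    rcases key_min (N ⊓ M) hDn inf_le_right with h | h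
    · exfalso
      have hcomm := commute_of_inf_eq_bot (T := (⊤ : Subgroup G)) le_top le_top
        (fun t _ a ha => hNn.conj_mem a ha t) (fun t _ b hb => hMn.conj_mem b hb t) h
      refine hNb (eq_bot_iff.mpr ?_)
      intro n hn
      have hnC : n ∈ C := by
        rw [hCdef, Subgroup.mem_centralizer_iff]
        intro m hm
        exact (hcomm n hn m hm).symm
      rwa [hCbot] at hnC
    · exact le_of_eq_of_le h.symm inf_le_left
  -- simplicity of M: no proper nontrivial M-invariant subgroup of M
  have hMsimple_aux : ∀ K : Subgroup G, K ≤ M → (∀ m ∈ M, ∀ k ∈ K, m * k * m⁻¹ ∈ K) →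
      K ≠ ⊥ → K ≠ M → False := by
    intro K0 hK0le hK0n hK0b hK0ne
    obtain ⟨K, hKle, hKn, hKb, hKne, hKmin⟩ : ∃ K : Subgroup G, K ≤ M ∧
        (∀ m ∈ M, ∀ k ∈ K, m * k * m⁻¹ ∈ K) ∧ K ≠ ⊥ ∧ K ≠ M ∧
        ∀ K' : Subgroup G, K' ≤ M → (∀ m ∈ M, ∀ k ∈ K', m * k * m⁻¹ ∈ K') → K' ≠ ⊥ →
          K' ≠ M → Nat.card K ≤ Nat.card K' := by
      set s : Set ℕ := {n | ∃ K : Subgroup G, (K ≤ M ∧ (∀ m ∈ M, ∀ k ∈ K, m * k * m⁻¹ ∈ K) ∧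
        K ≠ ⊥ ∧ K ≠ M) ∧ Nat.card K = n} with hs
      have hsne : s.Nonempty := ⟨_, K0, ⟨hK0le, hK0n, hK0b, hK0ne⟩, rfl⟩
      obtain ⟨K, hK, hKcard⟩ := Nat.sInf_mem hsne
      exact ⟨K, hK.1, hK.2.1, hK.2.2.1, hK.2.2.2,
        fun K' h1 h2 h3 h4 => hKcard ▸ Nat.sInf_le ⟨K', ⟨h1, h2, h3, h4⟩, rfl⟩⟩
    have hAle : ∀ g : G, conjSub g K ≤ M := by
      intro g x hx
      rw [mem_conjSub] at hx
      have h1 := hMn.conj_mem _ (hKle hx) g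
      have e : g * (g⁻¹ * x * g) * g⁻¹ = x := by group
      rwa [e] at h1
    have hAn : ∀ g : G, ∀ m ∈ M, ∀ k ∈ conjSub g K, m * k * m⁻¹ ∈ conjSub g K := by
      intro g m hm k hk
      rw [mem_conjSub] at hk ⊢
      have hm' : g⁻¹ * m * g ∈ M := by simpa using hMn.conj_mem m hm g⁻¹
      have h1 := hKn _ hm' _ hk
      have e : (g⁻¹ * m * g) * (g⁻¹ * k * g) * (g⁻¹ * m * g)⁻¹ = g⁻¹ * (m * k * m⁻¹) * g := by
        group
      rwa [e] at h1
    have hAcard : ∀ g : G, Nat.card (conjSub g K) = Nat.card K := fun g => card_conjSub g K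
    have hcardK1 : 1 < Nat.card K := (Subgroup.one_lt_card_iff_ne_bot K).mpr hKb
    have hAb : ∀ g : G, conjSub g K ≠ ⊥ := by
      intro g h
      have h1 := hAcard g
      rw [h, Subgroup.card_bot] at h1
      omega
    have hKcardM : Nat.card K ≠ Nat.card M := by
      intro h
      exact hKne (Subgroup.eq_of_le_of_card_ge hKle h.ge)
    have hAneM : ∀ g : G, conjSub g K ≠ M := by
      intro g h
      have h1 := hAcard g
      rw [h] at h1
      exact hKcardM h1.symm
    have dich : ∀ g1 g2 : G, conjSub g1 K = conjSub g2 K ∨ conjSub g1 K ⊓ conjSub g2 K = ⊥ := by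
      intro g1 g2
      rcases eq_or_ne (conjSub g1 K ⊓ conjSub g2 K) ⊥ with h | h
      · exact Or.inr h
      · left
        set D := conjSub g1 K ⊓ conjSub g2 K with hD
        have hDle : D ≤ M := inf_le_left.trans (hAle g1)
        have hDn : ∀ m ∈ M, ∀ k ∈ D, m * k * m⁻¹ ∈ D :=
          fun m hm k hk => ⟨hAn g1 m hm k hk.1, hAn g2 m hm k hk.2⟩
        have hDneM : D ≠ M := by
          intro hDM
          have hMle1 : M ≤ conjSub g1 K := le_of_eq_of_le hDM.symm inf_le_left
          exact hAneM g1 (le_antisymm (hAle g1) hMle1)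
        have hmin := hKmin D hDle hDn h hDneM
        have h1 : D = conjSub g1 K :=
          Subgroup.eq_of_le_of_card_ge inf_le_left (by rw [hAcard g1]; exact hmin)
        have h2 : D = conjSub g2 K :=
          Subgroup.eq_of_le_of_card_ge inf_le_right (by rw [hAcard g2]; exact hmin)
        rw [← h1, ← h2]
    have hNn : (⨆ g : G, conjSub g K).Normal := by
      refine normal_of_conjSub_le fun g => ?_
      have h1 : conjSub g (⨆ g' : G, conjSub g' K) = ⨆ g' : G, conjSub g (conjSub g' K) :=
        Subgroup.map_iSup _ _
      rw [show conjSub g (⨆ g' : G, conjSub g' K) =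
        ⨆ g' : G, conjSub g (conjSub g' K) from h1]
      refine iSup_le fun g' => ?_
      rw [conjSub_conjSub]
      exact le_iSup (fun g'' : G => conjSub g'' K) (g * g')
    have hNb : (⨆ g : G, conjSub g K) ≠ ⊥ := by
      intro h
      refine hAb 1 ?_
      exact le_bot_iff.mp (h ▸ le_iSup (fun g : G => conjSub g K) 1)
    have hNM : (⨆ g : G, conjSub g K) = M := by
      rcases key_min _ hNn (iSup_le hAle) with h | h
      · exact absurd h hNb
      · exact h
    have hKp : p ∣ Nat.card K := by
      by_contra hnd
      have hns : ∀ g : G, ((conjSub g K).subgroupOf M).Normal := by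
        intro g
        constructor
        intro n hn m
        rw [Subgroup.mem_subgroupOf] at hn ⊢
        have h1 : (↑m : G) * ↑n * (↑m)⁻¹ ∈ conjSub g K := hAn g ↑m m.2 ↑n hn
        simpa using h1
      have hcs : ∀ g : G, ¬ p ∣ Nat.card ((conjSub g K).subgroupOf M) := by
        intro g
        have h1 : Nat.card ((conjSub g K).subgroupOf M) = Nat.card (conjSub g K) :=
          Nat.card_congr (Subgroup.subgroupOfEquivOfLe (hAle g)).toEquiv
        rw [h1, hAcard]
        exact hnd
      have hsup : (⨆ g : G, (conjSub g K).subgroupOf M) = ⊤ := by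
        apply Subgroup.map_injective M.subtype_injective
        rw [Subgroup.map_iSup]
        have h1 : ∀ g : G, ((conjSub g K).subgroupOf M).map M.subtype = conjSub g K := by
          intro g
          rw [Subgroup.subgroupOf_map_subtype, inf_eq_left.mpr (hAle g)]
        calc (⨆ g : G, ((conjSub g K).subgroupOf M).map M.subtype)
            = ⨆ g : G, conjSub g K := iSup_congr h1
          _ = M := hNM
          _ = (⊤ : Subgroup ↥M).map M.subtype := by
              rw [← MonoidHom.range_eq_map, Subgroup.range_subtype]
      have h2 := not_dvd_card_iSup (G := ↥M) hp _ hns hcs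
      rw [hsup, Subgroup.card_top] at h2
      exact h2 hMp
    obtain ⟨x₀', hx₀'K, hx₀'p⟩ := cauchy K hKp
    obtain ⟨c, hcQ⟩ := conjQ x₀' hx₀'p
    set x := c * x₀' * c⁻¹ with hxdef
    have hxH : x ∈ H := hQH hcQ
    have hxp : orderOf x = p := by rw [hxdef, orderOf_conj]; exact hx₀'p
    have hxK1 : x ∈ conjSub c K := by
      rw [mem_conjSub]
      have e : c⁻¹ * (c * x₀' * c⁻¹) * c = x₀' := by group
      rw [hxdef, e]
      exact hx₀'K
    have hCxH : Subgroup.centralizer {x} ≤ H := SEcent x hxH hxp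
    obtain ⟨g₀, hg₀⟩ : ∃ g₀ : G, conjSub g₀ K ≠ conjSub c K := by
      by_contra hall
      push_neg at hall
      have h1 : (⨆ g : G, conjSub g K) = conjSub c K := by
        apply le_antisymm (iSup_le fun g => le_of_eq (hall g))
        exact le_iSup (fun g : G => conjSub g K) c
      rw [hNM] at h1
      exact hAneM c h1.symm
    have hdisj : conjSub g₀ K ⊓ conjSub c K = ⊥ := by
      rcases dich g₀ c with h | h
      · exact absurd h hg₀
      · exact h
    have hcommBK : ∀ b ∈ conjSub g₀ K, ∀ k ∈ conjSub c K, b * k = k * b :=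
      commute_of_inf_eq_bot (hAle g₀) (hAle c) (hAn g₀) (hAn c) hdisj
    have hBH : conjSub g₀ K ≤ H := by
      intro b hb
      refine hCxH ?_
      rw [Subgroup.mem_centralizer_iff]
      intro h hh
      rw [Set.mem_singleton_iff] at hh
      subst hh
      exact (hcommBK b hb x hxK1).symm
    have hBp : p ∣ Nat.card (conjSub g₀ K) := by rw [hAcard]; exact hKp
    obtain ⟨y, hyB, hyp⟩ := cauchy (conjSub g₀ K) hBp
    have hyH : y ∈ H := hBH hyB
    have hCyH : Subgroup.centralizer {y} ≤ H := SEcent y hyH hyp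
    have hK1H : conjSub c K ≤ H := by
      intro k hk
      refine hCyH ?_
      rw [Subgroup.mem_centralizer_iff]
      intro h hh
      rw [Set.mem_singleton_iff] at hh
      subst hh
      exact hcommBK _ hyB k hk
    have hAH : ∀ g : G, conjSub g K ≤ H := by
      intro g
      rcases dich g c with h | h
      · rw [h]; exact hK1H
      · have hcomm' := commute_of_inf_eq_bot (hAle g) (hAle c) (hAn g) (hAn c) h
        intro b hb
        refine hCxH ?_
        rw [Subgroup.mem_centralizer_iff]
        intro h' hh'
        rw [Set.mem_singleton_iff] at hh'
        subst hh'
        exact (hcomm' b hb x hxK1).symm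
    have hMH : M ≤ H := by
      rw [← hNM]
      exact iSup_le hAH
    exact SE2 M hMn hMH hMp
  haveI hMnt : Nontrivial ↥M := (Subgroup.nontrivial_iff_ne_bot M).mpr hMb
  have hMsimple : IsSimpleGroup ↥M := by
    refine ⟨fun N hN => ?_⟩
    by_contra hcon
    push_neg at hcon
    set K := N.map M.subtype with hKdef
    have hKle : K ≤ M := Subgroup.map_subtype_le N
    have hKn : ∀ m ∈ M, ∀ k ∈ K, m * k * m⁻¹ ∈ K := by
      intro m hm k hk
      rw [hKdef, Subgroup.mem_map] at hk ⊢
      obtain ⟨k', hk', rfl⟩ := hk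
      exact ⟨⟨m, hm⟩ * k' * ⟨m, hm⟩⁻¹, hN.conj_mem k' hk' ⟨m, hm⟩, rfl⟩
    refine hMsimple_aux K hKle hKn ?_ ?_
    · intro h
      refine hcon.1 ?_
      rwa [hKdef, Subgroup.map_eq_bot_iff_of_injective _ M.subtype_injective] at h
    · intro h
      refine hcon.2 ?_
      apply Subgroup.map_injective M.subtype_injective
      rw [← MonoidHom.range_eq_map, Subgroup.range_subtype]
      exact h
  -- M is perfect
  have hMperf : commutator ↥M = ⊤ := by
    have hnorm : (commutator ↥M).Normal := Subgroup.commutator_normal ⊤ ⊤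
    rcases hMsimple.eq_bot_or_eq_top_of_normal (commutator ↥M) hnorm with h | h
    · exfalso
      apply hMnab
      intro a ha b hb
      have h1 : ⁅(⟨a, ha⟩ : ↥M), (⟨b, hb⟩ : ↥M)⁆ ∈ commutator ↥M :=
        Subgroup.commutator_mem_commutator (Subgroup.mem_top _) (Subgroup.mem_top _)
      rw [h, Subgroup.mem_bot] at h1
      have h2 := commutatorElement_eq_one_iff_commute.mp h1
      exact congrArg Subtype.val h2
    · exact h
  -- M is a component
  have hMquasi : IsQuasisimple M := by
    refine ⟨hMperf, ?_⟩
    haveI := hMsimple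
    exact isSimpleGroup_of_mulEquiv
      (((QuotientGroup.quotientMulEquivOfEq hZM).trans
        (QuotientGroup.quotientBot (G := ↥M)))).symm
  have hMcomp : IsComponent M :=
    ⟨Relation.ReflTransGen.single ⟨le_top, fun b _ a ha => hMn.conj_mem a ha b⟩, hMquasi⟩
  -- every nontrivial subnormal subgroup contains M
  have hsubn : ∀ K : Subgroup G, IsSubnormal K → K = ⊥ ∨ M ≤ K := by
    intro K hK
    unfold IsSubnormal at hK
    induction hK using Relation.ReflTransGen.head_induction_on with
    | refl => exact Or.inr le_top
    | @head A B₁ h' htail ih =>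
      obtain ⟨hAB, hconj⟩ := h'
      rcases ih with hB | hB
      · left
        exact le_bot_iff.mp (hB ▸ hAB)
      · have hDinv : ∀ m ∈ M, ∀ k ∈ A ⊓ M, m * k * m⁻¹ ∈ A ⊓ M := by
          intro m hm k hk
          exact ⟨hconj m (hB hm) k hk.1, hMn.conj_mem k hk.2 m⟩
        by_cases hD : A ⊓ M = ⊥
        · left
          have hcomm := commute_of_inf_eq_bot (T := B₁) hAB hB
            (fun t ht a ha => hconj t ht a ha) (fun t _ b hb => hMn.conj_mem b hb t) hD
          refine eq_bot_iff.mpr fun a ha => ?_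
          have haC : a ∈ C := by
            rw [hCdef, Subgroup.mem_centralizer_iff]
            intro m hm
            exact (hcomm a ha m hm).symm
          rw [hCbot] at haC
          exact haC
        · by_cases hDM : A ⊓ M = M
          · right
            exact le_of_eq_of_le hDM.symm inf_le_left
          · exact absurd (hMsimple_aux (A ⊓ M) inf_le_right hDinv hD hDM) not_false
  -- every component equals M
  have hcompM : ∀ L : Subgroup G, IsComponent L → L = M := by
    rintro L ⟨hLsub, hLperf, hLq⟩
    have hLb : L ≠ ⊥ := by
      intro h
      have hsub1 : Subsingleton ↥L := by rw [h]; infer_instance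
      have hsub2 : Subsingleton (↥L ⧸ Subgroup.center ↥L) :=
        QuotientGroup.mk_surjective.subsingleton
      exact false_of_nontrivial_of_subsingleton (↥L ⧸ Subgroup.center ↥L)
    have hML : M ≤ L := by
      rcases hsubn L hLsub with h | h
      · exact absurd h hLb
      · exact h
    haveI := hMn
    set A := M.subgroupOf L with hAdef
    have hAn' : A.Normal := Subgroup.normal_subgroupOf
    have hmapn : (A.map (QuotientGroup.mk' (Subgroup.center ↥L))).Normal :=
      hAn'.map (QuotientGroup.mk' (Subgroup.center ↥L)) QuotientGroup.mk_surjective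
    rcases hLq.eq_bot_or_eq_top_of_normal _ hmapn with h | h
    · exfalso
      have hAZ : A ≤ Subgroup.center ↥L := by
        rw [Subgroup.map_eq_bot_iff, QuotientGroup.ker_mk'] at h
        exact h
      apply hMnab
      intro a ha b hb
      have haL : a ∈ L := hML ha
      have hbL : b ∈ L := hML hb
      have h1 : (⟨a, haL⟩ : ↥L) ∈ A := Subgroup.mem_subgroupOf.mpr ha
      have h2 := Subgroup.mem_center_iff.mp (hAZ h1) ⟨b, hbL⟩
      have h3 := congrArg Subtype.val h2
      exact h3.symm
    · have hdecomp : ∀ l : ↥L, ∃ a ∈ A, a⁻¹ * l ∈ Subgroup.center ↥L := by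
        intro l
        have h1 : QuotientGroup.mk' (Subgroup.center ↥L) l ∈
            A.map (QuotientGroup.mk' (Subgroup.center ↥L)) := by
          rw [h]; exact Subgroup.mem_top _
        obtain ⟨a, ha, hal⟩ := h1
        refine ⟨a, ha, ?_⟩
        have h3 : a⁻¹ * l ∈ (QuotientGroup.mk' (Subgroup.center ↥L)).ker := by
          rw [MonoidHom.mem_ker, map_mul, map_inv, hal]
          group
        rwa [QuotientGroup.ker_mk'] at h3
      have hcommle : commutator ↥L ≤ A := by
        rw [commutator_def, Subgroup.commutator_le]
        intro g1 _ g2 _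
        obtain ⟨a1, ha1, hz1⟩ := hdecomp g1
        obtain ⟨a2, ha2, hz2⟩ := hdecomp g2
        have hzc1 := Subgroup.mem_center_iff.mp hz1
        have hzc2 := Subgroup.mem_center_iff.mp hz2
        set z1 := a1⁻¹ * g1 with hz1def
        set z2 := a2⁻¹ * g2 with hz2def
        have hg1 : g1 = a1 * z1 := by rw [hz1def]; group
        have hg2 : g2 = a2 * z2 := by rw [hz2def]; group
        have he : ⁅g1, g2⁆ = a1 * a2 * a1⁻¹ * a2⁻¹ := by
          rw [commutatorElement_def, hg1, hg2]
          calc a1 * z1 * (a2 * z2) * (a1 * z1)⁻¹ * (a2 * z2)⁻¹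
              = a1 * (z1 * (a2 * z2) * z1⁻¹) * a1⁻¹ * (z2⁻¹ * a2⁻¹) := by group
            _ = a1 * ((a2 * z2) * z1 * z1⁻¹) * a1⁻¹ * (z2⁻¹ * a2⁻¹) := by
                rw [← hzc1 (a2 * z2)]
            _ = a1 * a2 * (z2 * a1⁻¹) * (z2⁻¹ * a2⁻¹) := by group
            _ = a1 * a2 * (a1⁻¹ * z2) * (z2⁻¹ * a2⁻¹) := by rw [← hzc2 a1⁻¹]
            _ = a1 * a2 * a1⁻¹ * a2⁻¹ := by group
        rw [he]
        exact A.mul_mem (A.mul_mem (A.mul_mem ha1 ha2) (A.inv_mem ha1)) (A.inv_mem ha2)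
      rw [hLperf, top_le_iff] at hcommle
      have hLM : L ≤ M := by
        intro l hl
        have h1 : (⟨l, hl⟩ : ↥L) ∈ A := by rw [hcommle]; exact Subgroup.mem_top _
        exact Subgroup.mem_subgroupOf.mp h1
      exact le_antisymm hLM hML
  -- the layer equals M
  have hlayer : layerSub G = M := by
    apply le_antisymm
    · exact sSup_le fun L hL => le_of_eq (hcompM L hL)
    · exact le_sSup hMcomp
  -- the Fitting subgroup is trivial
  have hFit : fittingSubgroup G = ⊥ := by
    refine le_bot_iff.mp (sSup_le fun N hN => ?_)
    rcases eq_or_ne N ⊥ with h | h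
    · exact le_of_eq h
    · exfalso
      have hMN : M ≤ N := hMuniq N hN.1 h
      haveI : Group.IsNilpotent ↥N := hN.2
      have hnilM : Group.IsNilpotent ↥M :=
        nilpotent_of_mulEquiv (Subgroup.subgroupOfEquivOfLe hMN)
      obtain ⟨n, hn⟩ := nilpotent_iff_lowerCentralSeries.mp hnilM
      have hall : ∀ k : ℕ, Subgroup.lowerCentralSeries (⊤ : Subgroup ↥M) k = ⊤ := by
        intro k
        induction k with
        | zero => rfl
        | succ k ih =>
          rw [Subgroup.lowerCentralSeries_succ, ih]
          exact hMperf
      rw [hall n] at hn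
      obtain ⟨u, v, huv⟩ := hMnt
      have hu : u ∈ (⊥ : Subgroup ↥M) := hn ▸ Subgroup.mem_top u
      have hv : v ∈ (⊥ : Subgroup ↥M) := hn ▸ Subgroup.mem_top v
      rw [Subgroup.mem_bot] at hu hv
      exact huv (hu.trans hv.symm)
  refine ⟨hFit, ?_, ?_, ?_⟩
  · rw [genFitting, hFit, bot_sup_eq]
  · rw [hlayer]
    exact hMsimple
  · have hex : ¬ ∀ a b : ↥M, a * b = b * a := by
      intro hab
      apply hMnab
      intro x hx y hy
      exact congrArg Subtype.val (hab ⟨x, hx⟩ ⟨y, hy⟩)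
    push_neg at hex
    obtain ⟨a, b, hab⟩ := hex
    rw [hlayer]
    exact ⟨a, b, hab⟩

end Main
end

section
/- Let $p$ be an odd prime, $G$ a finite group, and $H$ a strongly $p$-embedded subgroup of $G$. Assume that for every involution $t \in H$, $p$ divides $|C_H(t)|$. Then for every involution $t \in H$, $t^G \cap H = t^H$; that is, any two $G$-conjugate involutions of $H$ are already conjugate in $H$. -/
lemma mem_conjSub_iff {G : Type*} [Group G] {g x : G} {H : Subgroup G} :
    x ∈ conjSub g H ↔ g⁻¹ * x * g ∈ H := by
  constructor
  · rintro ⟨y, hy, rfl⟩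
    have e : g⁻¹ * (g * y * g⁻¹) * g = y := by group
    show g⁻¹ * (g * y * g⁻¹) * g ∈ H
    rw [e]; exact hy
  · intro h
    exact ⟨g⁻¹ * x * g, h, show g * (g⁻¹ * x * g) * g⁻¹ = x by group⟩

/-- If `x ∈ H` has order `p` and `g⁻¹ x g ∈ H`, then `g ∈ H`. -/
lemma mem_of_conj_mem {G : Type*} [Group G] [Finite G] {p : ℕ} {H : Subgroup G}
    (hH : IsStronglyPEmbedded p H) {x g : G} (hx : x ∈ H) (hord : orderOf x = p)
    (hconj : g⁻¹ * x * g ∈ H) : g ∈ H := by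
  by_contra hg
  apply hH.2.2 g hg
  have hmem : x ∈ H ⊓ conjSub g H := ⟨hx, mem_conjSub_iff.mpr hconj⟩
  have h1 : orderOf (⟨x, hmem⟩ : ↥(H ⊓ conjSub g H)) = p := by
    rw [← hord]
    exact (orderOf_injective (H ⊓ conjSub g H).subtype (Subgroup.subtype_injective _) ⟨x, hmem⟩).symm
  rw [← h1]
  exact orderOf_dvd_natCard _

/-- A `p`-subgroup intersecting `H` nontrivially is contained in `H`. -/
lemma pSubgroup_le {G : Type*} [Group G] [Finite G] {p : ℕ} (hp : p.Prime) {H : Subgroup G}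
    (hH : IsStronglyPEmbedded p H) {P : Subgroup G} (hP : IsPGroup p P) {y : G}
    (hyP : y ∈ P) (hyH : y ∈ H) (hord : orderOf y = p) : P ≤ H := by
  haveI := Fact.mk hp
  haveI : Group.IsNilpotent ↥P := hP.isNilpotent
  have hcond := normalizerCondition_of_isNilpotent (G := ↥P)
  set K : Subgroup ↥P := H.subgroupOf P with hK
  suffices hKtop : K = ⊤ by
    intro z hz
    have : (⟨z, hz⟩ : ↥P) ∈ K := hKtop ▸ Subgroup.mem_top _
    exact this
  by_contra hKne
  obtain ⟨u, huN, huK⟩ := SetLike.exists_of_lt (hcond K (lt_top_iff_ne_top.mpr hKne))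
  have hyK : (⟨y, hyP⟩ : ↥P) ∈ K := hyH
  -- u⁻¹ y u ∈ H
  have h2 : u⁻¹ * (⟨y, hyP⟩ : ↥P) * u ∈ K := by
    have := (Subgroup.mem_normalizer_iff.mp huN (u⁻¹ * (⟨y, hyP⟩ : ↥P) * u)).mpr
    apply this
    have : u * (u⁻¹ * (⟨y, hyP⟩ : ↥P) * u) * u⁻¹ = ⟨y, hyP⟩ := by group
    rw [this]
    exact hyK
  have h3 : (↑u : G)⁻¹ * y * (↑u : G) ∈ H := h2
  have huH : (↑u : G) ∈ H := mem_of_conj_mem hH hyH hord h3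
  exact huK huH

theorem fusion_control_of_strongly_p_embedded {G : Type*} [Group G] [Finite G]
    (p : ℕ) (hp : p.Prime) (hodd : Odd p) (H : Subgroup G)
    (hH : IsStronglyPEmbedded p H)
    (hcent : ∀ t ∈ H, orderOf t = 2 → p ∣ Nat.card ↥(H ⊓ Subgroup.centralizer {t})) :
    ∀ t ∈ H, orderOf t = 2 → ∀ g : G, g * t * g⁻¹ ∈ H →
      ∃ h ∈ H, h * t * h⁻¹ = g * t * g⁻¹ := by
  intro t ht hordt g hgt
  haveI := Fact.mk hp
  set s := g * t * g⁻¹ with hs_def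
  have hords : orderOf s = 2 := by
    rw [hs_def, ← hordt]
    exact (SemiconjBy.orderOf_eq g (show g * t = (g * t * g⁻¹) * g by group)).symm
  -- element x of order p in H centralizing t
  obtain ⟨x', hx'⟩ := exists_prime_orderOf_dvd_card' p (hcent t ht hordt)
  have hxH : (↑x' : G) ∈ H := x'.2.1
  have hxc : (↑x' : G) * t = t * ↑x' := Subgroup.mem_centralizer_singleton_iff.mp x'.2.2
  have hordx : orderOf (↑x' : G) = p := by
    rw [← hx']
    exact orderOf_injective (H ⊓ Subgroup.centralizer {t}).subtype
      (Subgroup.subtype_injective _) x'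
  set x : G := ↑x'
  -- element y of order p in H centralizing s
  obtain ⟨y', hy'⟩ := exists_prime_orderOf_dvd_card' p (hcent s hgt hords)
  have hyH : (↑y' : G) ∈ H := y'.2.1
  have hyc : (↑y' : G) * s = s * ↑y' := Subgroup.mem_centralizer_singleton_iff.mp y'.2.2
  have hordy : orderOf (↑y' : G) = p := by
    rw [← hy']
    exact orderOf_injective (H ⊓ Subgroup.centralizer {s}).subtype
      (Subgroup.subtype_injective _) y'
  set y : G := ↑y'
  -- work in the centralizer of s
  set C := Subgroup.centralizer {s} with hC
  have hyC : y ∈ C := Subgroup.mem_centralizer_singleton_iff.mpr (by rw [hyc])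
  have hbC : g * x * g⁻¹ ∈ C := by
    refine Subgroup.mem_centralizer_singleton_iff.mpr ?_
    rw [hs_def]
    have : g * x * g⁻¹ * (g * t * g⁻¹) = g * (x * t) * g⁻¹ := by group
    rw [this, hxc]
    group
  set a : ↥C := ⟨y, hyC⟩ with ha
  set b : ↥C := ⟨g * x * g⁻¹, hbC⟩ with hb
  have horda : orderOf a = p := by
    rw [← hordy]
    exact (orderOf_injective C.subtype (Subgroup.subtype_injective _) a).symm
  have hordb : orderOf b = p := by
    have h1 : orderOf (g * x * g⁻¹) = p := by
      rw [← hordx]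
      exact (SemiconjBy.orderOf_eq g (show g * x = (g * x * g⁻¹) * g by group)).symm
    rw [← h1]
    exact (orderOf_injective C.subtype (Subgroup.subtype_injective _) b).symm
  have hPa : IsPGroup p (Subgroup.zpowers a) :=
    IsPGroup.of_card (by rw [Nat.card_zpowers, horda, pow_one])
  have hPb : IsPGroup p (Subgroup.zpowers b) :=
    IsPGroup.of_card (by rw [Nat.card_zpowers, hordb, pow_one])
  obtain ⟨Qa, hQa⟩ := hPa.exists_le_sylow
  obtain ⟨Qb, hQb⟩ := hPb.exists_le_sylow
  obtain ⟨c, hc⟩ := MulAction.exists_smul_eq ↥C Qb Qa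
  have hbQb : b ∈ (Qb : Subgroup ↥C) := hQb (Subgroup.mem_zpowers b)
  have hconjb : c * b * c⁻¹ ∈ (Qa : Subgroup ↥C) := by
    rw [← hc]
    have : c * b * c⁻¹ = MulAut.conj c • b := rfl
    rw [this, Sylow.smul_def, Sylow.pointwise_smul_def]
    exact Subgroup.smul_mem_pointwise_smul b (MulAut.conj c) _ hbQb
  -- map the Sylow subgroup to G
  set P : Subgroup G := (Qa : Subgroup ↥C).map C.subtype with hP
  have hPp : IsPGroup p P := Qa.2.map C.subtype
  have hyP : y ∈ P := ⟨a, hQa (Subgroup.mem_zpowers a), rfl⟩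
  have hPH : P ≤ H := pSubgroup_le hp hH hPp hyP hyH hordy
  have hcbP : (↑c : G) * (g * x * g⁻¹) * (↑c : G)⁻¹ ∈ P := ⟨c * b * c⁻¹, hconjb, rfl⟩
  have hcbH : (↑c : G) * (g * x * g⁻¹) * (↑c : G)⁻¹ ∈ H := hPH hcbP
  -- the conjugating element
  set h : G := ↑c * g with hh
  have hxh : h * x * h⁻¹ ∈ H := by
    have : h * x * h⁻¹ = (↑c : G) * (g * x * g⁻¹) * (↑c : G)⁻¹ := by rw [hh]; group
    rw [this]
    exact hcbH
  have hhinv : h⁻¹ ∈ H := by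
    apply mem_of_conj_mem hH hxH hordx
    have : (h⁻¹)⁻¹ * x * h⁻¹ = h * x * h⁻¹ := by group
    rw [this]
    exact hxh
  have hhH : h ∈ H := by simpa using H.inv_mem hhinv
  refine ⟨h, hhH, ?_⟩
  have hcs : (↑c : G) * s = s * ↑c := Subgroup.mem_centralizer_singleton_iff.mp c.2
  have : h * t * h⁻¹ = (↑c : G) * s * (↑c : G)⁻¹ := by rw [hh, hs_def]; group
  rw [this, hcs]
  group
end

section
/- Let $p$ be an odd prime, $G$ a finite group, and $H$ a strongly $p$-embedded subgroup of $G$. Let $t \in H$ be an involution with $t^G \cap H = t^H$, and let $F \le H$ be a subgroup containing $t$. If $N_G(F) \not\le H$, then $C_G(t) \not\le H$. -/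
theorem centralizer_not_le_of_normalizer_not_le {G : Type*} [Group G] [Finite G]
    (p : ℕ) (hp : p.Prime) (hodd : Odd p) (H : Subgroup G)
    (hH : IsStronglyPEmbedded p H)
    (t : G) (htH : t ∈ H) (ht : orderOf t = 2)
    (hfus : ∀ g : G, g * t * g⁻¹ ∈ H → ∃ h ∈ H, h * t * h⁻¹ = g * t * g⁻¹)
    (F : Subgroup G) (hFH : F ≤ H) (htF : t ∈ F)
    (hNF : ¬ Subgroup.normalizer (F : Set G) ≤ H) :
    ¬ Subgroup.centralizer {t} ≤ H := by
  obtain ⟨g, hgN, hgH⟩ := Set.not_subset.mp hNF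
  have hconj : g * t * g⁻¹ ∈ H := by
    have : g * t * g⁻¹ ∈ F := (Subgroup.mem_normalizer_iff.mp hgN t).mp htF
    exact hFH this
  obtain ⟨h, hhH, hht⟩ := hfus g hconj
  intro hle
  apply hgH
  have hcent : h⁻¹ * g ∈ Subgroup.centralizer {t} := by
    rw [Subgroup.mem_centralizer_iff]
    rintro x rfl
    have : (h⁻¹ * g) * x * (h⁻¹ * g)⁻¹ = x := by
      calc (h⁻¹ * g) * x * (h⁻¹ * g)⁻¹ = h⁻¹ * (g * x * g⁻¹) * h := by group
      _ = h⁻¹ * (h * x * h⁻¹) * h := by rw [hht]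
      _ = x := by group
    calc x * (h⁻¹ * g) = (h⁻¹ * g) * x * (h⁻¹ * g)⁻¹ * (h⁻¹ * g) := by rw [this]
    _ = (h⁻¹ * g) * x := by group
  have := hle hcent
  have : h * (h⁻¹ * g) ∈ H := H.mul_mem hhH this
  simpa using this
end

section
/- Let $G$ be a finite group and $S$ a Sylow 2-subgroup of $G$. Then at least one of the following holds: (i) $O^2(G) \ne G$; (ii) $\Omega_1(Z(S)) \le \Phi(S)$; (iii) $N_G(S)$ acts non-trivially on $\Omega_1(Z(S))$. -/
/-- `O^2(G)`: the smallest normal subgroup with 2-group quotient, equivalently (in a finite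
group) the subgroup generated by the elements of odd order. -/
def twoResidual (G : Type*) [Group G] : Subgroup G :=
  Subgroup.closure {x : G | Odd (orderOf x)}

/-- `Ω₁(K)`: the subgroup generated by the involutions of `K`. -/
def omega1 {G : Type*} [Group G] (K : Subgroup G) : Subgroup G :=
  Subgroup.closure {x : G | x ∈ K ∧ x ^ 2 = 1}

/-- `Z(S)` as a subgroup of `G`, for `S : Subgroup G`. -/
def centerIn {G : Type*} [Group G] (S : Subgroup G) : Subgroup G :=
  S ⊓ Subgroup.centralizer (S : Set G)

lemma aux_support_card {α : Type*} [Fintype α] [DecidableEq α] (σ : Equiv.Perm α)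
    (h2 : σ ^ 2 = 1) (hs : Equiv.Perm.sign σ = 1) : σ.support.card % 4 = 0 := by
  have hdvd : orderOf σ ∣ 2 := orderOf_dvd_of_pow_eq_one h2
  have hct : ∀ n ∈ σ.cycleType, n = 2 := by
    intro n hn
    have h1 := Equiv.Perm.two_le_of_mem_cycleType hn
    have h2' : n ∣ 2 := (Equiv.Perm.dvd_of_mem_cycleType hn).trans hdvd
    exact le_antisymm (Nat.le_of_dvd two_pos h2') h1
  have hrep : σ.cycleType = Multiset.replicate (Multiset.card σ.cycleType) 2 :=
    Multiset.eq_replicate_card.mpr hct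
  set k := Multiset.card σ.cycleType with hk
  have hsum : σ.support.card = 2 * k := by
    rw [← Equiv.Perm.sum_cycleType, hrep, Multiset.sum_replicate, smul_eq_mul, mul_comm]
  have hsign : Equiv.Perm.sign σ = (-1 : ℤˣ) ^ k := by
    rw [Equiv.Perm.sign_of_cycleType, Equiv.Perm.sum_cycleType, hsum, ← hk]
    rw [pow_add, pow_mul]
    simp
  rw [hsign] at hs
  have hkeven : Even k := by
    by_contra hodd
    rw [Nat.not_even_iff_odd] at hodd
    rw [hodd.neg_one_pow] at hs
    exact (by decide : (-1 : ℤˣ) ≠ 1) hs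
  obtain ⟨j, hj⟩ := hkeven
  omega

lemma aux_two_to_one {α β : Type*} [DecidableEq α] [DecidableEq β] (F : Finset α)
    (p : α → β) (τ : α → α)
    (hτF : ∀ x ∈ F, τ x ∈ F) (hpτ : ∀ x, p (τ x) = p x) (hτne : ∀ x, τ x ≠ x)
    (hfib : ∀ x y, p x = p y → y = x ∨ y = τ x) :
    F.card = 2 * (F.image p).card := by
  rw [Finset.card_eq_sum_card_image p F, Finset.sum_eq_card_nsmul (b := 2), smul_eq_mul, mul_comm]
  intro b hb
  obtain ⟨x, hxF, hxb⟩ := Finset.mem_image.mp hb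
  have : F.filter (fun a => p a = b) = {x, τ x} := by
    ext y
    simp only [Finset.mem_filter, Finset.mem_insert, Finset.mem_singleton]
    constructor
    · rintro ⟨hyF, hyb⟩
      rcases hfib x y (by rw [hxb, hyb]) with h | h
      · exact Or.inl h
      · exact Or.inr h
    · rintro (rfl | rfl)
      · exact ⟨hxF, hxb⟩
      · exact ⟨hτF x hxF, by rw [hpτ, hxb]⟩
  rw [this, Finset.card_insert_of_notMem (by simp [(hτne x).symm]), Finset.card_singleton]

lemma aux_coatom_package {P : Type*} [Group P] [Finite P] (hp : IsPGroup 2 P)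
    {M : Subgroup P} (hM : IsCoatom M) :
    M.Normal ∧ M.index = 2 ∧ ∃ m₀ : P, m₀ ∉ M ∧ ∀ a b : P, a ∉ M → b ∉ M → a⁻¹ * b ∈ M := by
  haveI : Fact (Nat.Prime 2) := ⟨Nat.prime_two⟩
  haveI : Group.IsNilpotent P := hp.isNilpotent
  have hnorm : M.Normal :=
    Subgroup.NormalizerCondition.normal_of_coatom M normalizerCondition_of_isNilpotent hM
  haveI := hnorm
  refine ⟨hnorm, ?_⟩
  set mkq := QuotientGroup.mk' M with hmkq
  have hsurj : Function.Surjective mkq := QuotientGroup.mk'_surjective M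
  have hmem1 : ∀ a : P, mkq a = 1 ↔ a ∈ M := fun a => QuotientGroup.eq_one_iff a
  obtain ⟨g, hg⟩ : ∃ g : P, g ∉ M := by
    by_contra h; push_neg at h
    exact hM.1 ((Subgroup.eq_top_iff' M).mpr h)
  have hy0 : mkq g ≠ 1 := fun h => hg ((hmem1 g).mp h)
  obtain ⟨k, hk⟩ := IsPGroup.iff_orderOf.mp (hp.to_quotient M) (mkq g)
  have hkpos : k ≠ 0 := by
    rintro rfl
    rw [pow_zero, orderOf_eq_one_iff] at hk
    exact hy0 hk
  set y : P ⧸ M := mkq g ^ (2 ^ (k - 1)) with hy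
  have hy2 : y ^ 2 = 1 := by
    rw [hy, ← pow_mul, ← pow_succ,
      Nat.sub_add_cancel (Nat.one_le_iff_ne_zero.mpr hkpos), ← hk, pow_orderOf_eq_one]
  have hy1 : y ≠ 1 := by
    intro h
    have hdvd := orderOf_dvd_of_pow_eq_one (hy ▸ h : mkq g ^ (2 ^ (k - 1)) = 1)
    rw [hk] at hdvd
    have h1 := Nat.le_of_dvd (by positivity) hdvd
    have h2 : (2:ℕ) ^ (k-1) < 2 ^ k := Nat.pow_lt_pow_right one_lt_two (by omega)
    omega
  obtain ⟨t, ht⟩ := hsurj y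
  have htM : t ∉ M := by
    intro h
    exact hy1 (by rw [← ht]; exact (hmem1 t).mpr h)
  have htop : Subgroup.zpowers y = ⊤ := by
    have hle : M ≤ (Subgroup.zpowers y).comap mkq := by
      intro m hm
      refine Subgroup.mem_comap.mpr ?_
      rw [(hmem1 m).mpr hm]
      exact Subgroup.one_mem _
    have hlt : M < (Subgroup.zpowers y).comap mkq := by
      refine lt_of_le_of_ne hle ?_
      intro h
      apply htM
      rw [h]
      exact Subgroup.mem_comap.mpr (by rw [ht]; exact Subgroup.mem_zpowers y)
    have h2 := hM.2 _ hlt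
    calc Subgroup.zpowers y = ((Subgroup.zpowers y).comap mkq).map mkq :=
          (Subgroup.map_comap_eq_self_of_surjective hsurj _).symm
      _ = (⊤ : Subgroup P).map mkq := by rw [h2]
      _ = ⊤ := Subgroup.map_top_of_surjective mkq hsurj
  have hy2' : y ^ (2:ℤ) = 1 := by
    rw [show ((2:ℤ)) = ((2:ℕ):ℤ) by norm_num, zpow_natCast, hy2]
  have hall : ∀ x : P ⧸ M, x = 1 ∨ x = y := by
    intro x
    have hx : x ∈ Subgroup.zpowers y := htop ▸ Subgroup.mem_top x
    obtain ⟨n, hn⟩ := Subgroup.mem_zpowers_iff.mp hx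
    rcases Int.even_or_odd n with ⟨s, rfl⟩ | ⟨s, rfl⟩
    · left
      rw [← hn, show s + s = 2 * s by ring, zpow_mul, hy2', one_zpow]
    · right
      rw [← hn, zpow_add, zpow_mul, hy2', one_zpow, one_mul, zpow_one]
  constructor
  · rw [Subgroup.index]
    refine Nat.card_eq_two_iff.mpr ⟨1, y, Ne.symm hy1, ?_⟩
    rw [Set.eq_univ_iff_forall]
    intro x
    rcases hall x with h | h <;> simp [h]
  · refine ⟨t, htM, ?_⟩
    intro a b ha hb
    have ha' : mkq a = y := (hall (mkq a)).resolve_left (fun h => ha ((hmem1 a).mp h))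
    have hb' : mkq b = y := (hall (mkq b)).resolve_left (fun h => hb ((hmem1 b).mp h))
    have : mkq (a⁻¹ * b) = 1 := by rw [map_mul, map_inv, ha', hb', inv_mul_cancel]
    exact (hmem1 _).mp this

theorem thompson_transfer_consequence {G : Type*} [Group G] [Finite G]
    (S : Sylow 2 G) :
    twoResidual G ≠ ⊤ ∨
    omega1 (centerIn (S : Subgroup G)) ≤
      Subgroup.map (S : Subgroup G).subtype (frattini ↥(S : Subgroup G)) ∨
    ∃ g ∈ Subgroup.normalizer ((S : Subgroup G) : Set G), ∃ x ∈ omega1 (centerIn (S : Subgroup G)),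
      g * x * g⁻¹ ≠ x := by
  classical
  by_contra hcon
  push_neg at hcon
  obtain ⟨h2top, hΩle, hNtriv⟩ := hcon
  -- extract an involution u in Z(S) not in the Frattini subgroup
  rw [omega1, Subgroup.closure_le, Set.not_subset] at hΩle
  obtain ⟨u, hugen, huΦ⟩ := hΩle
  obtain ⟨huZ, hu2⟩ := hugen
  obtain ⟨huS, huC⟩ := Subgroup.mem_inf.mp (show u ∈ (S : Subgroup G) ⊓
    Subgroup.centralizer ((S : Subgroup G) : Set G) from huZ)
  rw [Subgroup.mem_centralizer_iff] at huC
  have huω : u ∈ omega1 (centerIn (S : Subgroup G)) := Subgroup.subset_closure ⟨huZ, hu2⟩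
  have huinv : u⁻¹ = u := by
    rw [inv_eq_iff_mul_eq_one, ← sq, hu2]
  -- a maximal subgroup avoiding u
  have huF : (⟨u, huS⟩ : (S : Subgroup G)) ∉ frattini ↥(S : Subgroup G) := by
    intro h
    exact huΦ ⟨_, h, rfl⟩
  obtain ⟨M, hM, huM⟩ : ∃ M : Subgroup ↥(S : Subgroup G), IsCoatom M ∧
      (⟨u, huS⟩ : (S : Subgroup G)) ∉ M := by
    by_contra h
    push_neg at h
    apply huF
    show _ ∈ Order.radical (Subgroup ↥(S : Subgroup G))
    rw [Order.radical]
    exact Subgroup.mem_iInf.mpr fun M => Subgroup.mem_iInf.mpr fun hM => h M hM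
  obtain ⟨hMnorm, hMidx, m₀, hm₀M, hMtwo⟩ := aux_coatom_package S.isPGroup' hM
  haveI := hMnorm
  -- T as a subgroup of G
  set T : Subgroup G := M.map (S : Subgroup G).subtype with hT
  have hTS : T ≤ (S : Subgroup G) := by
    rw [hT]; exact Subgroup.map_subtype_le M
  have memT : ∀ (a : G) (ha : a ∈ (S : Subgroup G)), a ∈ T ↔ (⟨a, ha⟩ : (S : Subgroup G)) ∈ M := by
    intro a ha
    constructor
    · rintro ⟨m, hm, hme⟩
      have hma : m = ⟨a, ha⟩ := Subtype.ext hme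
      exact hma ▸ hm
    · intro h; exact ⟨⟨a, ha⟩, h, rfl⟩
  have huT : u ∉ T := fun h => huM ((memT u huS).mp h)
  set s₀ : G := (m₀ : G) with hs₀
  have hs₀S : s₀ ∈ (S : Subgroup G) := m₀.2
  have hs₀T : s₀ ∉ T := by
    intro h
    exact hm₀M ((memT s₀ hs₀S).mp h)
  have hTconj : ∀ (s t : G), s ∈ (S : Subgroup G) → t ∈ T → s * t * s⁻¹ ∈ T := by
    intro s t hs ht
    obtain ⟨m, hm, rfl⟩ := ht
    exact ⟨_, hMnorm.conj_mem m hm ⟨s, hs⟩, rfl⟩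
  have hTout : ∀ a b : G, a ∈ (S : Subgroup G) → b ∈ (S : Subgroup G) →
      a ∉ T → b ∉ T → a⁻¹ * b ∈ T := by
    intro a b haS hbS haT hbT
    have := hMtwo ⟨a, haS⟩ ⟨b, hbS⟩ (fun h => haT ((memT a haS).mpr h))
      (fun h => hbT ((memT b hbS).mpr h))
    exact ⟨_, this, rfl⟩
  -- index computations
  have hrel : T.relIndex (S : Subgroup G) = 2 := by
    rw [hT, Subgroup.relIndex, Subgroup.subgroupOf,
      Subgroup.comap_map_eq_self_of_injective (Subgroup.subtype_injective _)]
    exact hMidx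
  haveI : Fact (Nat.Prime 2) := ⟨Nat.prime_two⟩
  have hSodd : ¬ (2 ∣ (S : Subgroup G).index) := Sylow.not_dvd_index S
  have hTidx : T.index = 2 * (S : Subgroup G).index := by
    rw [← Subgroup.relIndex_mul_index hTS, hrel]
  -- the sign homomorphism
  letI : Fintype (G ⧸ T) := Fintype.ofFinite _
  set φ : G →* ℤˣ := Equiv.Perm.sign.comp (MulAction.toPermHom G (G ⧸ T)) with hφ
  have hφodd : ∀ x : G, Odd (orderOf x) → φ x = 1 := by
    intro x hx
    obtain ⟨k, hk⟩ := hx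
    have h1 : φ x ^ orderOf x = 1 := by rw [← map_pow, pow_orderOf_eq_one, map_one]
    have h2 : φ x ^ 2 = 1 := Int.units_sq (φ x)
    have h3 : φ x ^ (2 * k + 1) = 1 := by rw [← hk]; exact h1
    rwa [pow_add, pow_mul, h2, one_pow, one_mul, pow_one] at h3
  have hφu : φ u = 1 := by
    have hmem : u ∈ Subgroup.closure {x : G | Odd (orderOf x)} := by
      have : u ∈ twoResidual G := by rw [h2top]; exact Subgroup.mem_top u
      rwa [twoResidual] at this
    refine Subgroup.closure_induction (fun x hx => hφodd x hx) (map_one φ)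
      (fun x y _ _ hx hy => by rw [map_mul, hx, hy, one_mul])
      (fun x _ hx => by rw [map_inv, hx, inv_one]) hmem
  set σ : Equiv.Perm (G ⧸ T) := MulAction.toPermHom G (G ⧸ T) u with hσ
  have hσ2 : σ ^ 2 = 1 := by rw [hσ, ← map_pow, hu2, map_one]
  have hσsign : Equiv.Perm.sign σ = 1 := hφu
  have h4 : σ.support.card % 4 = 0 := aux_support_card σ hσ2 hσsign
  -- fixed points
  set F : Finset (G ⧸ T) := Finset.univ.filter (fun x => u • x = x) with hF
  have hFcompl : F = σ.supportᶜ := by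
    ext x
    simp [hF, Equiv.Perm.mem_support, hσ, not_not]
  have hFcard : F.card = Fintype.card (G ⧸ T) - σ.support.card := by
    rw [hFcompl, Finset.card_compl]
  have hcardα : Fintype.card (G ⧸ T) = 2 * (S : Subgroup G).index := by
    rw [← hTidx, Subgroup.index, Nat.card_eq_fintype_card]
  have hsupp_le : σ.support.card ≤ Fintype.card (G ⧸ T) := Finset.card_le_univ _
  have hSodd' : (S : Subgroup G).index % 2 = 1 := by
    rcases Nat.even_or_odd ((S : Subgroup G).index) with h | h
    · exact absurd h.two_dvd hSodd
    · exact Nat.odd_iff.mp h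
  have hFmod : F.card % 4 = 2 := by omega
  -- membership in F
  have hFiff : ∀ a : G, (QuotientGroup.mk a : G ⧸ T) ∈ F ↔ a⁻¹ * u * a ∈ T := by
    intro a
    rw [hF, Finset.mem_filter]
    simp only [Finset.mem_univ, true_and]
    rw [MulAction.Quotient.smul_mk, QuotientGroup.eq]
    constructor
    · intro h
      have : (u • a)⁻¹ * a = a⁻¹ * u * a := by
        simp [smul_eq_mul, mul_inv_rev, huinv, mul_assoc]
      rwa [this] at h
    · intro h
      have : (u • a)⁻¹ * a = a⁻¹ * u * a := by
        simp [smul_eq_mul, mul_inv_rev, huinv, mul_assoc]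
      rwa [this]
  -- the projection and the pairing
  set p : G ⧸ T → G ⧸ (S : Subgroup G) := Subgroup.quotientMapOfLE hTS with hp
  have hpmk : ∀ a : G, p (QuotientGroup.mk a) = QuotientGroup.mk a :=
    fun a => Subgroup.quotientMapOfLE_apply_mk hTS a
  set τ : G ⧸ T → G ⧸ T := Quotient.map' (· * s₀) (by
    intro a b hab
    rw [QuotientGroup.leftRel_apply] at hab ⊢
    have heq : (a * s₀)⁻¹ * (b * s₀) = s₀⁻¹ * (a⁻¹ * b) * (s₀⁻¹)⁻¹ := by group
    rw [heq]
    exact hTconj s₀⁻¹ _ ((S : Subgroup G).inv_mem hs₀S) hab) with hτ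
  have hτmk : ∀ a : G, τ (QuotientGroup.mk a) = QuotientGroup.mk (a * s₀) := fun a => rfl
  have hτF : ∀ x ∈ F, τ x ∈ F := by
    intro x hx
    obtain ⟨a, rfl⟩ := QuotientGroup.mk_surjective x
    rw [hFiff] at hx
    rw [hτmk, hFiff]
    have heq : (a * s₀)⁻¹ * u * (a * s₀) = s₀⁻¹ * (a⁻¹ * u * a) * (s₀⁻¹)⁻¹ := by group
    rw [heq]
    exact hTconj s₀⁻¹ _ ((S : Subgroup G).inv_mem hs₀S) hx
  have hpτ : ∀ x, p (τ x) = p x := by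
    intro x
    obtain ⟨a, rfl⟩ := QuotientGroup.mk_surjective x
    rw [hτmk, hpmk, hpmk, QuotientGroup.eq]
    have heq : (a * s₀)⁻¹ * a = s₀⁻¹ * (a⁻¹ * a) := by group
    rw [heq]
    simp [Subgroup.inv_mem _ hs₀S]
  have hτne : ∀ x, τ x ≠ x := by
    intro x
    obtain ⟨a, rfl⟩ := QuotientGroup.mk_surjective x
    rw [hτmk, Ne, QuotientGroup.eq]
    intro h
    apply hs₀T
    have heq : (a * s₀)⁻¹ * a = s₀⁻¹ * (a⁻¹ * a) := by group
    rw [heq] at h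
    simp only [inv_mul_cancel, mul_one] at h
    exact (Subgroup.inv_mem_iff T).mp h
  have hfib : ∀ x y, p x = p y → y = x ∨ y = τ x := by
    intro x y hxy
    obtain ⟨a, rfl⟩ := QuotientGroup.mk_surjective x
    obtain ⟨b, rfl⟩ := QuotientGroup.mk_surjective y
    rw [hpmk, hpmk, QuotientGroup.eq] at hxy
    by_cases hab : a⁻¹ * b ∈ T
    · left
      exact (QuotientGroup.eq.mpr hab).symm
    · right
      rw [hτmk, QuotientGroup.eq]
      have hs : a⁻¹ * b ∉ T := hab
      have habS : a⁻¹ * b ∈ (S : Subgroup G) := hxy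
      have hin := hTout s₀ (a⁻¹ * b) hs₀S habS hs₀T hs
      have heq : b⁻¹ * (a * s₀) = (s₀⁻¹ * (a⁻¹ * b))⁻¹ := by group
      rw [heq]
      exact Subgroup.inv_mem _ hin
  set A : Finset (G ⧸ (S : Subgroup G)) := F.image p with hA
  have hAcard : F.card = 2 * A.card := aux_two_to_one F p τ hτF hpτ hτne hfib
  have hAodd : A.card % 2 = 1 := by omega
  -- S acts on A
  have hAstable : ∀ (s : G), s ∈ (S : Subgroup G) → ∀ y ∈ A, s • y ∈ A := by
    intro s hs y hy
    obtain ⟨x, hxF, rfl⟩ := Finset.mem_image.mp hy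
    obtain ⟨a, rfl⟩ := QuotientGroup.mk_surjective x
    rw [hpmk]
    refine Finset.mem_image.mpr ⟨QuotientGroup.mk (s * a), ?_, ?_⟩
    · rw [hFiff] at hxF ⊢
      have hc : s⁻¹ * u * s = u := by
        have := huC s hs
        calc s⁻¹ * u * s = s⁻¹ * (u * s) := by rw [mul_assoc]
          _ = s⁻¹ * (s * u) := by rw [← this]
          _ = u := by rw [← mul_assoc, inv_mul_cancel, one_mul]
      have heq : (s * a)⁻¹ * u * (s * a) = a⁻¹ * (s⁻¹ * u * s) * a := by group
      rw [heq, hc]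
      exact hxF
    · rw [hpmk, MulAction.Quotient.smul_mk]
      rfl
  letI actA : MulAction ↥(S : Subgroup G) ↥A :=
    { smul := fun s y => ⟨(s : G) • (y : G ⧸ (S : Subgroup G)), hAstable s s.2 y y.2⟩,
      one_smul := fun y => Subtype.ext (one_smul G (y : G ⧸ (S : Subgroup G))),
      mul_smul := fun s t y => Subtype.ext (mul_smul (s : G) (t : G) (y : G ⧸ (S : Subgroup G))) }
  have hmod := S.isPGroup'.card_modEq_card_fixedPoints (↥A)
  have hcA : Nat.card ↥A = A.card := Nat.card_eq_finsetCard A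
  have hfixne : (MulAction.fixedPoints ↥(S : Subgroup G) ↥A).Nonempty := by
    rw [Set.nonempty_iff_ne_empty]
    intro h
    rw [h] at hmod
    have h0 : Nat.card (∅ : Set ↥A) = 0 := by simp
    rw [h0, hcA] at hmod
    unfold Nat.ModEq at hmod
    omega
  obtain ⟨y, hyfix⟩ := hfixne
  obtain ⟨x, hxF, hxy⟩ := Finset.mem_image.mp y.2
  obtain ⟨h, rfl⟩ := QuotientGroup.mk_surjective x
  rw [hpmk] at hxy
  have huh : h⁻¹ * u * h ∈ T := (hFiff h).mp hxF
  -- h⁻¹ normalizes S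
  have hnormS : ∀ s ∈ (S : Subgroup G), h⁻¹ * s * h ∈ (S : Subgroup G) := by
    intro s hs
    have hfy := hyfix ⟨s⁻¹, (S : Subgroup G).inv_mem hs⟩
    have h1 : (s⁻¹ : G) • (y : G ⧸ (S : Subgroup G)) = (y : G ⧸ (S : Subgroup G)) :=
      congrArg Subtype.val hfy
    rw [← hxy, MulAction.Quotient.smul_mk, QuotientGroup.eq] at h1
    have heq : (s⁻¹ • h)⁻¹ * h = h⁻¹ * s * h := by
      simp [smul_eq_mul, mul_inv_rev, mul_assoc]
    rwa [heq] at h1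
  have hhN : h⁻¹ ∈ Subgroup.normalizer ((S : Subgroup G) : Set G) := by
    apply Subgroup.mem_normalizer_fintype
    intro n hn
    have := hnormS n hn
    simp only [inv_inv, mul_assoc] at this ⊢
    exact this
  have := hNtriv h⁻¹ hhN u huω
  rw [inv_inv] at this
  apply huT
  rw [← this]
  exact huh
end

section
/- Let $G$ be a finite group with $G = O^2(G)$, let $t \in G$ be an involution, and let $S \in \mathrm{Syl}_2(C_G(t))$. Assume $S = \langle y \rangle \times S_0$ with $t \in \langle y \rangle$ and $Z(S_0)$ elementary abelian. Then $\langle t \rangle = \langle y \rangle$, i.e., $y$ has order 2 and $y = t$. -/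
/-- `S` is a Sylow `p`-subgroup of the subgroup `K` (a maximal `p`-subgroup of `K`). -/
def IsSylowIn {G : Type*} [Group G] (p : ℕ) (S K : Subgroup G) : Prop :=
  S ≤ K ∧ IsPGroup p S ∧ ∀ Q : Subgroup G, Q ≤ K → IsPGroup p Q → S ≤ Q → Q = S

section Aux

variable {G : Type*} [Group G]

private lemma mul_form {y : G} {S₀ : Subgroup G} (hcomm : ∀ s ∈ S₀, Commute y s)
    {s : G} (hs : s ∈ S₀) (a b : ℤ) (s' : G) :
    (y ^ a * s) * (y ^ b * s') = y ^ (a + b) * (s * s') := by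
  have h : s * y ^ b = y ^ b * s := ((hcomm s hs).zpow_left b).eq.symm
  rw [mul_assoc, ← mul_assoc s, h, mul_assoc, ← mul_assoc, ← zpow_add]

private lemma decomp {y : G} {S₀ S : Subgroup G} (hcomm : ∀ s ∈ S₀, Commute y s)
    (hsup : Subgroup.zpowers y ⊔ S₀ = S) {x : G} (hx : x ∈ S) :
    ∃ (a : ℤ) (s : G), s ∈ S₀ ∧ x = y ^ a * s := by
  let K : Subgroup G :=
  { carrier := {x | ∃ (a : ℤ) (s : G), s ∈ S₀ ∧ x = y ^ a * s}
    one_mem' := ⟨0, 1, S₀.one_mem, by simp⟩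
    mul_mem' := by
      rintro u v ⟨a, s, hs, rfl⟩ ⟨b, s', hs', rfl⟩
      exact ⟨a + b, s * s', S₀.mul_mem hs hs', (mul_form hcomm hs a b s')⟩
    inv_mem' := by
      rintro u ⟨a, s, hs, rfl⟩
      refine ⟨-a, s⁻¹, S₀.inv_mem hs, ?_⟩
      have h : s⁻¹ * y ^ (-a) = y ^ (-a) * s⁻¹ :=
        (((hcomm s hs).zpow_left (-a)).inv_right).eq.symm
      rw [mul_inv_rev, ← zpow_neg, h] }
  have h1 : S ≤ K := by
    rw [← hsup]
    refine sup_le ?_ ?_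
    · rintro u hu
      obtain ⟨n, rfl⟩ := Subgroup.mem_zpowers_iff.mp hu
      exact ⟨n, 1, S₀.one_mem, (mul_one _).symm⟩
    · intro s hs
      exact ⟨0, s, hs, by rw [zpow_zero, one_mul]⟩
  exact h1 hx

private lemma uniq {y : G} {S₀ : Subgroup G} (hinf : Subgroup.zpowers y ⊓ S₀ = ⊥)
    {a b : ℤ} {s s' : G} (hs : s ∈ S₀) (hs' : s' ∈ S₀)
    (h : y ^ a * s = y ^ b * s') : y ^ (a - b) = 1 ∧ s = s' := by
  have e1 : y ^ (a - b) * s = s' := by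
    have h2 : y ^ (a - b) = y ^ (-b) * y ^ a := by rw [← zpow_add]; ring_nf
    rw [h2, mul_assoc, h, ← mul_assoc, ← zpow_add, neg_add_cancel, zpow_zero, one_mul]
  have e2 : y ^ (a - b) ∈ Subgroup.zpowers y ⊓ S₀ := by
    refine Subgroup.mem_inf.mpr ⟨Subgroup.mem_zpowers_iff.mpr ⟨a - b, rfl⟩, ?_⟩
    have : y ^ (a - b) = s' * s⁻¹ := eq_mul_inv_of_mul_eq e1
    rw [this]; exact S₀.mul_mem hs' (S₀.inv_mem hs)
  have e3 : y ^ (a - b) = 1 := Subgroup.mem_bot.mp (hinf ▸ e2)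
  refine ⟨e3, ?_⟩
  rw [e3, one_mul] at e1; exact e1

private lemma mem_sup_iff_even {y : G} {S₀ : Subgroup G}
    (hcomm : ∀ s ∈ S₀, Commute y s) (hinf : Subgroup.zpowers y ⊓ S₀ = ⊥)
    (hord : (2:ℤ) ∣ (orderOf y : ℤ)) {a : ℤ} {s : G} (hs : s ∈ S₀) :
    y ^ a * s ∈ Subgroup.zpowers (y ^ 2) ⊔ S₀ ↔ (2:ℤ) ∣ a := by
  have hcomm2 : ∀ s ∈ S₀, Commute (y ^ 2) s := fun s hs => (hcomm s hs).pow_left 2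
  have hzp : ∀ b : ℤ, (y ^ 2) ^ b = y ^ (2 * b) := by
    intro b
    rw [← zpow_natCast y 2, ← zpow_mul]
    norm_num
  constructor
  · intro hx
    obtain ⟨b, s', hs', heq⟩ := decomp hcomm2 rfl hx
    rw [hzp] at heq
    have h1 := (uniq hinf hs hs' heq).1
    have h2 : (orderOf y : ℤ) ∣ (a - 2 * b) := orderOf_dvd_iff_zpow_eq_one.mpr h1
    have h3 : (2:ℤ) ∣ (a - 2 * b) := dvd_trans hord h2
    omega
  · rintro ⟨c, rfl⟩
    refine Subgroup.mul_mem _ (Subgroup.mem_sup_left ?_) (Subgroup.mem_sup_right hs)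
    exact Subgroup.mem_zpowers_iff.mpr ⟨c, by rw [hzp]⟩

private lemma zpow_of_sq_eq_one {z : G} (hz : z ^ (2:ℕ) = 1) (c : ℤ) :
    z ^ c = if Even c then 1 else z := by
  have hz' : z ^ (2:ℤ) = 1 := by
    have : ((2:ℕ):ℤ) = (2:ℤ) := by norm_num
    rw [← this, zpow_natCast, hz]
  rcases Int.even_or_odd c with ⟨d, rfl⟩ | ⟨d, rfl⟩
  · rw [if_pos ⟨d, rfl⟩]
    have h2 : d + d = (2:ℤ) * d := by ring
    rw [h2, zpow_mul, hz', one_zpow]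
  · rw [if_neg (Int.not_even_iff_odd.mpr ⟨d, rfl⟩)]
    have h2 : (2:ℤ) * d + 1 = 2 * d + 1 := rfl
    rw [zpow_add, zpow_mul, hz', one_zpow, one_mul, zpow_one]

end Aux

theorem zpowers_eq_of_direct_factor {G : Type*} [Group G] [Finite G]
    (hG : twoResidual G = ⊤)
    (t : G) (ht : orderOf t = 2)
    (S : Subgroup G) (hS : IsSylowIn 2 S (Subgroup.centralizer {t}))
    (y : G) (S₀ : Subgroup G)
    (hcomm : ∀ s ∈ S₀, Commute y s)
    (hinf : Subgroup.zpowers y ⊓ S₀ = ⊥)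
    (hsup : Subgroup.zpowers y ⊔ S₀ = S)
    (htY : t ∈ Subgroup.zpowers y)
    (hZ : ∀ z ∈ S₀, (∀ w ∈ S₀, Commute z w) → z ^ 2 = 1) :
    Subgroup.zpowers t = Subgroup.zpowers y := by
  classical
  obtain ⟨hSle, hSp, hSmax⟩ := hS
  have hyS : y ∈ S := hsup ▸ Subgroup.mem_sup_left (Subgroup.mem_zpowers y)
  have htS : t ∈ S := hsup ▸ Subgroup.mem_sup_left htY
  have hS₀S : S₀ ≤ S := hsup ▸ le_sup_right
  have ht1 : t ≠ 1 := by
    intro h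
    rw [h, orderOf_one] at ht
    omega
  have ht2 : t ^ (2:ℕ) = 1 := by rw [← ht]; exact pow_orderOf_eq_one t
  obtain ⟨k0, hk0⟩ := hSp ⟨y, hyS⟩
  have hk0' : y ^ ((2:ℕ) ^ k0) = 1 := by
    have h := congrArg (Subtype.val) hk0
    simpa using h
  obtain ⟨k, hkle, hyk⟩ := (Nat.dvd_prime_pow Nat.prime_two).mp
    (orderOf_dvd_of_pow_eq_one hk0')
  clear hkle hk0 hk0'
  rcases k with _ | _ | m
  · -- orderOf y = 1
    exfalso
    rw [pow_zero] at hyk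
    have : y = 1 := orderOf_eq_one_iff.mp hyk
    rw [this, Subgroup.zpowers_one_eq_bot] at htY
    exact ht1 (Subgroup.mem_bot.mp htY)
  · -- orderOf y = 2 : show t = y
    have hy2 : y ^ (2:ℕ) = 1 := by
      rw [pow_one] at hyk
      rw [← hyk]; exact pow_orderOf_eq_one y
    obtain ⟨n, hn⟩ := Subgroup.mem_zpowers_iff.mp htY
    have := zpow_of_sq_eq_one hy2 n
    rw [hn] at this
    rcases em (Even n) with he | he
    · rw [if_pos he] at this; exact absurd this ht1
    · rw [if_neg he] at this; rw [this]
  · -- main case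
    exfalso
    -- basic commuting facts
    have hcommS : ∀ x ∈ S, Commute y x := by
      intro x hx
      obtain ⟨a, s, hs, rfl⟩ := decomp hcomm hsup hx
      exact ((Commute.refl y).zpow_right a).mul_right (hcomm s hs)
    set N1 : ℕ := 2 ^ (m + 1) with hN1
    have hy_ord : y ^ (2 * N1) = 1 := by
      have h := pow_orderOf_eq_one y
      rw [hyk] at h
      have he : 2 * N1 = 2 ^ (m + 1 + 1) := by rw [hN1]; ring
      rw [he]; exact h
    have hord' : (orderOf y : ℤ) = 2 * (N1:ℤ) := by rw [hyk, hN1]; push_cast; ring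
    have hdvdN : ∀ n : ℤ, y ^ n = 1 → (2 * (N1:ℤ)) ∣ n := fun n h =>
      hord' ▸ orderOf_dvd_iff_zpow_eq_one.mpr h
    have hN1ne : (N1:ℤ) ≠ 0 := by positivity
    -- t = y ^ N1
    have hy_half_sq : (y ^ N1) ^ (2:ℕ) = 1 := by
      rw [← pow_mul, mul_comm, hy_ord]
    have htz : t = y ^ N1 := by
      obtain ⟨n, hn⟩ := Subgroup.mem_zpowers_iff.mp htY
      have h2n : y ^ (2 * n) = 1 := by
        rw [two_mul, zpow_add, hn]
        have h := ht2
        rwa [pow_two] at h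
      obtain ⟨c, hc⟩ := hdvdN _ h2n
      have hc2 : n = (N1:ℤ) * c := by linarith
      have hzc : t = (y ^ N1) ^ c := by
        rw [← hn, hc2, zpow_mul, zpow_natCast]
      rw [zpow_of_sq_eq_one hy_half_sq c] at hzc
      rcases em (Even c) with he | he
      · rw [if_pos he] at hzc; exact absurd hzc ht1
      · rw [if_neg he] at hzc; exact hzc
    have hz_ne : y ^ N1 ≠ 1 := htz ▸ ht1
    -- M and its properties
    set M : Subgroup G := Subgroup.zpowers (y ^ (2:ℕ)) ⊔ S₀ with hMdef
    have horddvd : (2:ℤ) ∣ (orderOf y : ℤ) := ⟨(N1:ℤ), hord'⟩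
    have hmemM : ∀ (a : ℤ) (s : G), s ∈ S₀ → (y ^ a * s ∈ M ↔ (2:ℤ) ∣ a) :=
      fun a s hs => mem_sup_iff_even hcomm hinf horddvd hs
    have hMS : M ≤ S := by
      rw [← hsup]
      exact sup_le
        (le_trans (Subgroup.zpowers_le.mpr (Subgroup.pow_mem _ (Subgroup.mem_zpowers y) 2))
          le_sup_left)
        le_sup_right
    have hinter : ∀ g : G, g ∈ Subgroup.zpowers y → g ∈ S₀ → g = 1 := fun g h1 h2 =>
      Subgroup.mem_bot.mp (hinf ▸ Subgroup.mem_inf.mpr ⟨h1, h2⟩)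
    have hyM : y ∉ M := by
      intro h
      have h1 : y = y ^ (1:ℤ) * 1 := by simp
      rw [h1] at h
      have := (hmemM 1 1 S₀.one_mem).mp h
      omega
    -- powers of products
    have hprodpow : ∀ (a : ℤ) (s : G), s ∈ S₀ → ∀ N : ℕ,
        (y ^ a * s) ^ N = y ^ (a * N) * s ^ N := by
      intro a s hs N
      rw [((hcomm s hs).zpow_left a).mul_pow, ← zpow_natCast (y ^ a) N, ← zpow_mul]
    -- L9
    have hL9 : ∀ x ∈ S, x ^ N1 = 1 → x ∈ M := by
      intro x hx h1
      obtain ⟨a, s, hs, rfl⟩ := decomp hcomm hsup hx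
      rw [hprodpow a s hs] at h1
      have h2 : y ^ (a * (N1:ℤ)) = (s ^ N1)⁻¹ := eq_inv_of_mul_eq_one_left h1
      have h3 : y ^ (a * (N1:ℤ)) = 1 := by
        refine hinter _ (Subgroup.mem_zpowers_iff.mpr ⟨_, rfl⟩) ?_
        rw [h2]; exact S₀.inv_mem (S₀.pow_mem hs _)
      obtain ⟨c, hc⟩ := hdvdN _ h3
      have h5 : (2:ℤ) ∣ a := by
        refine ⟨c, mul_right_cancel₀ hN1ne ?_⟩
        linear_combination hc
      exact (hmemM a s hs).mpr h5
    -- L8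
    have hL8 : ∀ x ∈ S, x ^ N1 = t → x ∉ M := by
      intro x hx h1 hxM
      obtain ⟨a, s, hs, rfl⟩ := decomp hcomm hsup hx
      rw [hprodpow a s hs] at h1
      have htz' : t = y ^ ((N1:ℤ)) * 1 := by
        rw [mul_one, zpow_natCast]; exact htz
      rw [htz'] at h1
      have h2 := (uniq hinf (S₀.pow_mem hs _) S₀.one_mem h1).1
      obtain ⟨c, hc⟩ := hdvdN _ h2
      have h4 : (2:ℤ) ∣ (a - 1) := by
        refine ⟨c, mul_right_cancel₀ hN1ne ?_⟩
        linear_combination hc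
      have h5 := (hmemM a s hs).mp hxM
      omega
    -- conjugation stability of S₀ and M under S
    have hS₀conj : ∀ x ∈ S, ∀ w ∈ S₀, x * w * x⁻¹ ∈ S₀ := by
      intro x hx w hw
      obtain ⟨a, s, hs, rfl⟩ := decomp hcomm hsup hx
      have hmem : s * w * s⁻¹ ∈ S₀ := S₀.mul_mem (S₀.mul_mem hs hw) (S₀.inv_mem hs)
      have h1 : (y ^ a * s) * w * (y ^ a * s)⁻¹ = y ^ a * (s * w * s⁻¹) * (y ^ a)⁻¹ := by
        group
      have h2 : Commute (y ^ a) (s * w * s⁻¹) := (hcomm _ hmem).zpow_left a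
      have h3 : y ^ a * (s * w * s⁻¹) * (y ^ a)⁻¹ = s * w * s⁻¹ := by
        rw [h2.eq, mul_assoc, mul_inv_cancel, mul_one]
      rw [h1, h3]; exact hmem
    have hMconj1 : ∀ x ∈ S, ∀ u ∈ M, x * u * x⁻¹ ∈ M := by
      intro x hx u hu
      obtain ⟨b, w, hw, rfl⟩ := decomp (fun s hs => (hcomm s hs).pow_left 2) rfl hu
      have hc : Commute x ((y ^ (2:ℕ)) ^ b) :=
        (((hcommS x hx).pow_left 2).zpow_left b).symm
      have h1 : x * ((y ^ (2:ℕ)) ^ b * w) * x⁻¹ =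
          (x * (y ^ (2:ℕ)) ^ b * x⁻¹) * (x * w * x⁻¹) := by group
      have h2 : x * (y ^ (2:ℕ)) ^ b * x⁻¹ = (y ^ (2:ℕ)) ^ b := by
        rw [hc.eq, mul_assoc, mul_inv_cancel, mul_one]
      rw [h1, h2]
      exact M.mul_mem (Subgroup.mem_sup_left (Subgroup.mem_zpowers_iff.mpr ⟨b, rfl⟩))
        (Subgroup.mem_sup_right (hS₀conj x hx w hw))
    have hMconj : ∀ x ∈ S, ∀ u : G, (x * u * x⁻¹ ∈ M ↔ u ∈ M) := by
      intro x hx u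
      constructor
      · intro h
        have h1 := hMconj1 x⁻¹ (S.inv_mem hx) _ h
        have h2 : x⁻¹ * (x * u * x⁻¹) * x⁻¹⁻¹ = u := by group
        rwa [h2] at h1
      · exact hMconj1 x hx u
    -- the character χ : S → Z/2 with kernel M
    have hnotM_mul : ∀ u ∈ S, ∀ v ∈ S, u ∉ M → v ∉ M → u * v ∈ M := by
      intro u hu v hv hu' hv'
      obtain ⟨a, s, hs, rfl⟩ := decomp hcomm hsup hu
      obtain ⟨b, s', hs', rfl⟩ := decomp hcomm hsup hv
      rw [mul_form hcomm hs a b s']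
      have ha := (hmemM a s hs).not.mp hu'
      have hb := (hmemM b s' hs').not.mp hv'
      refine (hmemM (a + b) (s * s') (S₀.mul_mem hs hs')).mpr ?_
      omega
    let χ : ↥S →* Multiplicative (ZMod 2) := MonoidHom.mk'
      (fun u => Multiplicative.ofAdd (if (u : G) ∈ M then 0 else 1))
      (fun u v => by
        by_cases hu : (u : G) ∈ M <;> by_cases hv : (v : G) ∈ M
        · have huv : ((u * v : ↥S) : G) ∈ M := by
            rw [Subgroup.coe_mul]; exact M.mul_mem hu hv
          rw [if_pos hu, if_pos hv, if_pos huv]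
          try decide
        · have huv : ((u * v : ↥S) : G) ∉ M := by
            rw [Subgroup.coe_mul]
            intro h
            exact hv (by
              have : (v : G) = (u : G)⁻¹ * ((u : G) * (v : G)) := by group
              rw [this]; exact M.mul_mem (M.inv_mem hu) h)
          rw [if_pos hu, if_neg hv, if_neg huv]
          try decide
        · have huv : ((u * v : ↥S) : G) ∉ M := by
            rw [Subgroup.coe_mul]
            intro h
            exact hu (by
              have : (u : G) = ((u : G) * (v : G)) * (v : G)⁻¹ := by group
              rw [this]; exact M.mul_mem h (M.inv_mem hv))
          rw [if_neg hu, if_pos hv, if_neg huv]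
          try decide
        · have huv : ((u * v : ↥S) : G) ∈ M := by
            rw [Subgroup.coe_mul]; exact hnotM_mul _ u.2 _ v.2 hu hv
          rw [if_neg hu, if_neg hv, if_pos huv]
          try decide)
    have hχ : ∀ (g : G) (hg : g ∈ S),
        χ ⟨g, hg⟩ = Multiplicative.ofAdd (if g ∈ M then 0 else 1) := fun g hg => rfl
    -- L10 : the normalizer of S fixes t
    have hL10 : ∀ n : G, n ∈ Subgroup.normalizer (S : Set G) → n * t * n⁻¹ = t := by
      intro n hn
      have hmem := Subgroup.mem_normalizer_iff.mp hn
      have hzS : y ^ (2 ^ m) ∈ S := S.pow_mem hyS _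
      have hmn : (2:ℕ) ^ m * 2 = N1 := by rw [hN1]; ring
      have hz2 : (y ^ (2 ^ m : ℕ)) ^ (2:ℕ) = t := by
        rw [← pow_mul, hmn, ← htz]
      have hwS : n * y ^ (2 ^ m : ℕ) * n⁻¹ ∈ S := (hmem _).mp hzS
      have hwt : (n * y ^ (2 ^ m : ℕ) * n⁻¹) ^ (2:ℕ) = n * t * n⁻¹ := by
        rw [conj_pow, hz2]
      have hwcomm : ∀ x ∈ S, Commute (n * y ^ (2 ^ m : ℕ) * n⁻¹) x := by
        intro x hx
        have hx' : n⁻¹ * x * n ∈ S := by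
          refine (hmem (n⁻¹ * x * n)).mpr ?_
          have h : n * (n⁻¹ * x * n) * n⁻¹ = x := by group
          rw [h]; exact hx
        have hc : y ^ (2 ^ m : ℕ) * (n⁻¹ * x * n) = (n⁻¹ * x * n) * y ^ (2 ^ m : ℕ) :=
          ((hcommS _ hx').pow_left _).eq
        show (n * y ^ (2 ^ m : ℕ) * n⁻¹) * x = x * (n * y ^ (2 ^ m : ℕ) * n⁻¹)
        calc (n * y ^ (2 ^ m : ℕ) * n⁻¹) * x
            = n * (y ^ (2 ^ m : ℕ) * (n⁻¹ * x * n)) * n⁻¹ := by group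
          _ = n * ((n⁻¹ * x * n) * y ^ (2 ^ m : ℕ)) * n⁻¹ := by rw [hc]
          _ = x * (n * y ^ (2 ^ m : ℕ) * n⁻¹) := by group
      obtain ⟨a, s, hs, hwdec⟩ := decomp hcomm hsup hwS
      have hscomm : ∀ u ∈ S₀, Commute s u := by
        intro u hu
        have h1 : Commute (y ^ a * s) u := hwdec ▸ hwcomm u (hS₀S hu)
        have h2 : Commute ((y ^ a)⁻¹) u := ((hcomm u hu).zpow_left a).inv_left
        have h3 : (y ^ a)⁻¹ * (y ^ a * s) = s := by group
        exact h3 ▸ h2.mul_left h1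
      have hs2 : s ^ 2 = 1 := hZ s hs hscomm
      have hw2 : (n * y ^ (2 ^ m : ℕ) * n⁻¹) ^ (2:ℕ) = y ^ (2 * a) := by
        rw [hwdec, hprodpow a s hs 2, hs2, mul_one]
        congr 1
        push_cast
        ring
      have hr : n * t * n⁻¹ = y ^ ((2:ℤ) * a) := by rw [← hwt, hw2]
      have h1 : (n * t * n⁻¹) ^ (2:ℕ) = 1 := by
        rw [conj_pow, ht2, mul_one, mul_inv_cancel]
      have hr4 : y ^ ((2:ℤ) * (2 * a)) = 1 := by
        have h2 : y ^ ((2:ℤ) * (2 * a)) = (y ^ ((2:ℤ) * a)) ^ (2:ℕ) := by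
          rw [← zpow_natCast (y ^ ((2:ℤ) * a)) 2, ← zpow_mul]
          congr 1
          push_cast
          ring
        rw [h2, ← hr, h1]
      obtain ⟨c, hc⟩ := hdvdN _ hr4
      have hN1c : (N1:ℤ) = 2 * (2:ℤ) ^ m := by rw [hN1]; push_cast; ring
      have hac : a = (2:ℤ) ^ m * c := by
        refine mul_left_cancel₀ (by norm_num : (4:ℤ) ≠ 0) ?_
        have h3 : (4:ℤ) * a = 2 * (2 * a) := by ring
        rw [h3, hc, hN1c]
        ring
      have htc : n * t * n⁻¹ = t ^ c := by
        rw [hr, htz]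
        rw [← zpow_natCast y N1, ← zpow_mul]
        congr 1
        rw [hN1c, hac]
        ring
      rw [zpow_of_sq_eq_one ht2 c] at htc
      rcases em (Even c) with he | he
      · exfalso
        rw [if_pos he] at htc
        have : t = 1 := by
          have h4 : t = n⁻¹ * (n * t * n⁻¹) * n := by group
          rw [h4, htc]
          group
        exact ht1 this
      · rw [if_neg he] at htc
        exact htc
    -- normalizer of S is contained in the centralizer of t
    have hNC : Subgroup.normalizer (S : Set G) ≤ Subgroup.centralizer {t} := by
      intro n hn
      rw [Subgroup.mem_centralizer_iff]
      intro g hg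
      rw [Set.mem_singleton_iff] at hg
      rw [hg]
      have h := hL10 n hn
      have h2 : n * t = t * n := by
        calc n * t = (n * t * n⁻¹) * n := by group
          _ = t * n := by rw [h]
      exact h2.symm
    -- S is a Sylow 2-subgroup of G
    haveI : Fact (Nat.Prime 2) := ⟨Nat.prime_two⟩
    obtain ⟨T, hST⟩ := hSp.exists_le_sylow
    have hTS : (T : Subgroup G) = S := by
      have hQ : Subgroup.normalizer (S : Set G) ⊓ (T : Subgroup G) = S :=
        hSmax _ (le_trans inf_le_left hNC) (T.2.to_le inf_le_right)
          (le_inf S.le_normalizer hST)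
      by_contra hne
      have hlt : S.subgroupOf T < ⊤ := by
        rcases lt_or_eq_of_le (le_top : S.subgroupOf T ≤ ⊤) with h | h
        · exact h
        · exact absurd (le_antisymm (Subgroup.subgroupOf_eq_top.mp h) hST) hne
      haveI : Group.IsNilpotent ↥(T : Subgroup G) := T.2.isNilpotent
      obtain ⟨x, hx1, hx2⟩ := SetLike.exists_of_lt
        (normalizerCondition_of_isNilpotent _ hlt)
      have hxn : (x : G) ∈ Subgroup.normalizer (S : Set G) := by
        apply Subgroup.mem_normalizer_fintype
        intro g hg
        have hgT : g ∈ (T : Subgroup G) := hST hg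
        have h1 : (⟨g, hgT⟩ : ↥(T : Subgroup G)) ∈ S.subgroupOf T :=
          Subgroup.mem_subgroupOf.mpr hg
        have h2 := (Subgroup.mem_normalizer_iff.mp hx1 ⟨g, hgT⟩).mp h1
        rw [Subgroup.mem_subgroupOf] at h2
        simpa using h2
      have hxS : (x : G) ∈ S := hQ ▸ Subgroup.mem_inf.mpr ⟨hxn, x.2⟩
      exact hx2 (Subgroup.mem_subgroupOf.mpr hxS)
    -- the index of S in G is odd
    haveI : Finite (Sylow 2 G) :=
      Finite.of_injective (fun P : Sylow 2 G => (P : Subgroup G))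
        (fun P Q h => Sylow.ext h)
    haveI : (T : Subgroup G).FiniteIndex := Subgroup.finiteIndex_of_finite_quotient
    have hodd : ¬ 2 ∣ S.index := by
      rw [← hTS]
      exact T.not_dvd_index
    -- the coset predicate
    set pred : G ⧸ S → Prop := fun x => x.out⁻¹ * y * x.out ∈ M with hpreddef
    have hpred_mk : ∀ g : G, pred ((g : G ⧸ S)) ↔ g⁻¹ * y * g ∈ M := by
      intro g
      rw [hpreddef]
      dsimp only
      have hmk : ((((g : G ⧸ S)).out : G) : G ⧸ S) = (g : G ⧸ S) := QuotientGroup.out_eq' _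
      have hsmem : ((g : G ⧸ S)).out⁻¹ * g ∈ S := QuotientGroup.eq.mp hmk
      have key : (((g : G ⧸ S)).out⁻¹ * g)⁻¹ * (((g : G ⧸ S)).out⁻¹ * y * ((g : G ⧸ S)).out) *
          ((((g : G ⧸ S)).out⁻¹ * g)⁻¹)⁻¹ = g⁻¹ * y * g := by group
      rw [← key]
      exact (hMconj _ (S.inv_mem hsmem) _).symm
    -- fixed points of y on G/S
    have hPzy : IsPGroup 2 ↥(Subgroup.zpowers y) := hSp.to_le (Subgroup.zpowers_le.mpr hyS)
    have hyfix_iff : ∀ x : G ⧸ S,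
        x ∈ MulAction.fixedPoints ↥(Subgroup.zpowers y) (G ⧸ S) ↔ y • x = x := by
      intro x
      rw [MulAction.mem_fixedPoints]
      constructor
      · intro h
        exact h ⟨y, Subgroup.mem_zpowers y⟩
      · intro h c
        exact Subgroup.zpowers_le.mpr (MulAction.mem_stabilizer_iff.mpr h) c.2
    have hcF : ¬ (2:ℕ) ∣ Nat.card {x : G ⧸ S // y • x = x} := by
      have h1 := hPzy.card_modEq_card_fixedPoints (G ⧸ S)
      have h2 : Nat.card ↥(MulAction.fixedPoints ↥(Subgroup.zpowers y) (G ⧸ S)) =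
          Nat.card {x : G ⧸ S // y • x = x} :=
        Nat.card_congr (Equiv.subtypeEquivRight hyfix_iff)
      have h3 : Nat.card (G ⧸ S) = S.index := (Subgroup.index_eq_card S).symm
      rw [h2, h3] at h1
      intro hdvd
      unfold Nat.ModEq at h1
      omega
    -- the invariant subset of fixed points with conjugate in M
    let V : SubMulAction ↥S (G ⧸ S) :=
    { carrier := {x : G ⧸ S | y • x = x ∧ pred x}
      smul_mem' := by
        rintro c x ⟨hx1, hx2⟩
        have hsc : (c : ↥S) • x = (c : G) • x := rfl
        constructor
        · show y • ((c : ↥S) • x) = (c : ↥S) • x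
          rw [hsc]
          calc y • ((c:G) • x) = (y * (c:G)) • x := (mul_smul _ _ _).symm
            _ = ((c:G) * y) • x := by rw [(hcommS _ c.2).eq]
            _ = (c:G) • (y • x) := mul_smul _ _ _
            _ = (c:G) • x := by rw [hx1]
        · show pred ((c : ↥S) • x)
          have hg : ((x.out : G) : G ⧸ S) = x := QuotientGroup.out_eq' x
          have h1 : (c : ↥S) • x = (((c : G) * x.out : G) : G ⧸ S) := by
            rw [hsc]
            conv_lhs => rw [← hg]
            rfl
          rw [h1]
          refine (hpred_mk _).mpr ?_
          have h2 : ((c:G) * x.out)⁻¹ * y * ((c:G) * x.out) =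
              x.out⁻¹ * ((c:G)⁻¹ * y * (c:G)) * x.out := by group
          have h3 : (c:G)⁻¹ * y * (c:G) = y := by
            rw [mul_assoc, (hcommS _ c.2).eq, inv_mul_cancel_left]
          rw [h2, h3]
          have hx2' : x.out⁻¹ * y * x.out ∈ M := by rw [hpreddef] at hx2; exact hx2
          exact hx2' }
    have hVempty : IsEmpty ↥(MulAction.fixedPoints ↥S ↥V) := by
      refine ⟨fun q => ?_⟩
      obtain ⟨⟨x, hx1, hx2⟩, hfix⟩ := q
      rw [MulAction.mem_fixedPoints] at hfix
      have hg : ((x.out : G) : G ⧸ S) = x := QuotientGroup.out_eq' x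
      have hstep : ∀ s ∈ S, x.out⁻¹ * s * x.out ∈ S := by
        intro s hs
        have h3 := hfix ⟨s⁻¹, S.inv_mem hs⟩
        have h4 : (s⁻¹ : G) • x = x := by
          have h5 := congrArg (Subtype.val) h3
          rw [SubMulAction.val_smul] at h5
          exact h5
        rw [← hg] at h4
        have h5 : (((s⁻¹ * x.out : G)) : G ⧸ S) = ((x.out : G) : G ⧸ S) := h4
        have h6 := QuotientGroup.eq.mp h5
        have h7 : (s⁻¹ * x.out)⁻¹ * x.out = x.out⁻¹ * s * x.out := by group
        rwa [h7] at h6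
      have hgN : x.out⁻¹ ∈ Subgroup.normalizer (S : Set G) := by
        apply Subgroup.mem_normalizer_fintype
        intro s hs
        have h8 : x.out⁻¹ * s * (x.out⁻¹)⁻¹ = x.out⁻¹ * s * x.out := by rw [inv_inv]
        rw [h8]
        exact hstep s hs
      have htconj : x.out⁻¹ * t * x.out = t := by
        have h8 := hL10 x.out⁻¹ hgN
        rwa [inv_inv] at h8
      have huS : x.out⁻¹ * y * x.out ∈ S := by
        have h9 : ((y * x.out : G) : G ⧸ S) = ((x.out : G) : G ⧸ S) := by
          show y • ((x.out : G) : G ⧸ S) = ((x.out : G) : G ⧸ S)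
          rw [hg]
          exact hx1
        have h10 := QuotientGroup.eq.mp h9
        have h11 : (x.out⁻¹ * y * x.out) = ((y * x.out)⁻¹ * x.out)⁻¹ := by group
        rw [h11]
        exact S.inv_mem h10
      have hupow : (x.out⁻¹ * y * x.out) ^ N1 = t := by
        have h12 : x.out⁻¹ * y * x.out = x.out⁻¹ * y * (x.out⁻¹)⁻¹ := by rw [inv_inv]
        rw [h12, conj_pow, inv_inv, ← htz, htconj]
      have hx2' : x.out⁻¹ * y * x.out ∈ M := by rw [hpreddef] at hx2; exact hx2
      exact hL8 _ huS hupow hx2'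
    have hcM : (2:ℕ) ∣ Nat.card {x : G ⧸ S // y • x = x ∧ pred x} := by
      have h1 := hSp.card_modEq_card_fixedPoints ↥V
      have h2 : Nat.card ↥(MulAction.fixedPoints ↥S ↥V) = 0 := @Nat.card_of_isEmpty _ hVempty
      have h3 : Nat.card ↥V = Nat.card {x : G ⧸ S // y • x = x ∧ pred x} :=
        Nat.card_congr (Equiv.subtypeEquivRight (fun x => Iff.rfl))
      rw [h2, h3] at h1
      exact (Nat.modEq_zero_iff_dvd.mp h1)
    have hsplit : Nat.card {x : G ⧸ S // y • x = x} =
        Nat.card {x : G ⧸ S // y • x = x ∧ pred x} +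
        Nat.card {x : G ⧸ S // y • x = x ∧ ¬ pred x} := by
      rw [← Nat.card_sum]
      refine Nat.card_congr ?_
      exact
      { toFun := fun b => if h : pred b.1 then Sum.inl ⟨b.1, b.2, h⟩ else Sum.inr ⟨b.1, b.2, h⟩
        invFun := Sum.elim (fun a => ⟨a.1, a.2.1⟩) (fun a => ⟨a.1, a.2.1⟩)
        left_inv := by
          rintro ⟨x, h1⟩
          by_cases h : pred x <;> simp [h]
        right_inv := by
          rintro (⟨x, h1, h2⟩ | ⟨x, h1, h2⟩) <;> simp [h2] }
    have hcN : ¬ (2:ℕ) ∣ Nat.card {x : G ⧸ S // y • x = x ∧ ¬ pred x} := by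
      intro h
      rw [hsplit] at hcF
      omega
    -- the transfer homomorphism
    haveI : S.FiniteIndex := Subgroup.finiteIndex_of_finite_quotient
    haveI : Fintype (Quotient (MulAction.orbitRel ↥(Subgroup.zpowers y) (G ⧸ S))) :=
      Fintype.ofFinite _
    have htr := MonoidHom.transfer_eq_prod_quotient_orbitRel_zpowers_quot χ y
    have htr1 : (MonoidHom.transfer χ) y = 1 := by
      have hker : twoResidual G ≤ (MonoidHom.transfer χ).ker := by
        rw [twoResidual]
        refine (Subgroup.closure_le _).mpr ?_
        intro x hx
        rw [SetLike.mem_coe, MonoidHom.mem_ker]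
        have h1 : orderOf ((MonoidHom.transfer χ) x) ∣ orderOf x := orderOf_map_dvd _ _
        have hcard2 : Nat.card (Multiplicative (ZMod 2)) = 2 := by
          rw [Nat.card_eq_fintype_card]
          decide
        have h2 : orderOf ((MonoidHom.transfer χ) x) ∣ 2 := by
          have h2' := orderOf_dvd_natCard ((MonoidHom.transfer χ) x)
          rwa [hcard2] at h2'
        have hox : Odd (orderOf x) := hx
        rw [Nat.odd_iff] at hox
        have h3 : orderOf ((MonoidHom.transfer χ) x) = 1 := by
          rcases (Nat.dvd_prime Nat.prime_two).mp h2 with h | h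
          · exact h
          · exfalso
            rw [h] at h1
            omega
        exact orderOf_eq_one_iff.mp h3
      have hy' : y ∈ twoResidual G := by rw [hG]; exact Subgroup.mem_top y
      exact MonoidHom.mem_ker.mp (hker hy')
    rw [htr1] at htr
    have h1 := congrArg Multiplicative.toAdd htr
    rw [toAdd_prod] at h1
    simp only [hχ, toAdd_ofAdd, toAdd_one] at h1
    -- h1 : 0 = ∑ q, if (expr q) ∈ M then 0 else 1
    set uu : Quotient (MulAction.orbitRel ↥(Subgroup.zpowers y) (G ⧸ S)) → G :=
      fun q => q.out.out⁻¹ * y ^ Function.minimalPeriod (fun x : G ⧸ S => y • x) q.out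
        * q.out.out with huudef
    have huu : ∀ q, uu q ∈ S := fun q =>
      QuotientGroup.out_conj_pow_minimalPeriod_mem S y q.out
    have h2 : ∑ q, (if uu q ∈ M then (0:ZMod 2) else 1) =
        ∑ q, (if uu q ∉ M then (1:ZMod 2) else 0) :=
      Finset.sum_congr rfl (fun q _ => by by_cases h : uu q ∈ M <;> simp [h])
    rw [h2, Finset.sum_boole] at h1
    have h3 : (2:ℕ) ∣ (Finset.univ.filter (fun q => uu q ∉ M)).card :=
      (ZMod.natCast_eq_zero_iff _ 2).mp h1.symm
    -- identify the count with the set of fixed points not in M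
    have hper : ∀ z : G ⧸ S, Function.minimalPeriod (fun x : G ⧸ S => y • x) z ∣ 2 * N1 := by
      intro z
      have hiter : (fun x : G ⧸ S => y • x)^[2 * N1] z = z := by
        rw [smul_iterate, hy_ord]
        exact one_smul _ _
      exact Function.IsPeriodicPt.minimalPeriod_dvd hiter
    have h2N1 : 2 * N1 = 2 ^ (m + 2) := by rw [hN1]; ring
    have hq2 : ∀ q, uu q ∉ M → Function.minimalPeriod (fun x : G ⧸ S => y • x) q.out = 1 := by
      intro q hq
      by_contra hne
      obtain ⟨j, hjle, hj⟩ := (Nat.dvd_prime_pow Nat.prime_two).mp (h2N1 ▸ hper q.out)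
      rcases j with _ | j'
      · exact hne (by rw [hj, pow_zero])
      · have hexp : (2:ℕ) ^ (j' + 1) * N1 = (2 * N1) * 2 ^ j' := by ring
        have h5 : (y ^ Function.minimalPeriod (fun x : G ⧸ S => y • x) q.out) ^ N1 = 1 := by
          rw [hj, ← pow_mul, hexp, pow_mul, hy_ord, one_pow]
        have h6 : uu q ^ N1 = 1 := by
          show (q.out.out⁻¹ * y ^ Function.minimalPeriod (fun x : G ⧸ S => y • x) q.out
            * q.out.out) ^ N1 = 1
          rw [show q.out.out⁻¹ * y ^ Function.minimalPeriod (fun x : G ⧸ S => y • x) q.out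
              * q.out.out = q.out.out⁻¹ * y ^ Function.minimalPeriod
                (fun x : G ⧸ S => y • x) q.out * (q.out.out⁻¹)⁻¹ from by rw [inv_inv],
            conj_pow, h5, inv_inv]
          group
        exact hq (hL9 _ (huu q) h6)
    have hq3 : ∀ q, uu q ∉ M → y • q.out = q.out := fun q hq =>
      Function.minimalPeriod_eq_one_iff_isFixedPt.mp (hq2 q hq)
    have houtfix : ∀ x : G ⧸ S, y • x = x →
        (Quotient.mk'' x :
          Quotient (MulAction.orbitRel ↥(Subgroup.zpowers y) (G ⧸ S))).out = x := by
      intro x hx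
      have h1' : (MulAction.orbitRel ↥(Subgroup.zpowers y) (G ⧸ S))
          ((Quotient.mk'' x :
            Quotient (MulAction.orbitRel ↥(Subgroup.zpowers y) (G ⧸ S))).out) x :=
        Quotient.exact (Quotient.out_eq _)
      rw [MulAction.orbitRel_apply] at h1'
      obtain ⟨c, hc⟩ := MulAction.mem_orbit_iff.mp h1'
      have h2' : (c : G) • x = x :=
        Subgroup.zpowers_le.mpr (MulAction.mem_stabilizer_iff.mpr hx) c.2
      rw [← hc]
      exact h2'
    have e2 : {q : Quotient (MulAction.orbitRel ↥(Subgroup.zpowers y) (G ⧸ S)) // uu q ∉ M} ≃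
        {x : G ⧸ S // y • x = x ∧ ¬ pred x} :=
    { toFun := fun q => ⟨q.1.out, hq3 q.1 q.2, by
        have hn1 := hq2 q.1 q.2
        have heq : uu q.1 = q.1.out.out⁻¹ * y * q.1.out.out := by
          show q.1.out.out⁻¹ * y ^ Function.minimalPeriod (fun x : G ⧸ S => y • x) q.1.out
            * q.1.out.out = _
          rw [hn1, pow_one]
        rw [hpreddef]
        dsimp only
        rw [← heq]
        exact q.2⟩
      invFun := fun x => ⟨Quotient.mk'' x.1, by
        have hfix := x.2.1
        have hout := houtfix x.1 hfix
        have hn1 : Function.minimalPeriod (fun z : G ⧸ S => y • z)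
            (Quotient.mk'' x.1 :
              Quotient (MulAction.orbitRel ↥(Subgroup.zpowers y) (G ⧸ S))).out = 1 := by
          rw [hout]
          exact Function.minimalPeriod_eq_one_iff_isFixedPt.mpr hfix
        intro hmem
        apply x.2.2
        show x.1.out⁻¹ * y * x.1.out ∈ M
        have heq : uu (Quotient.mk'' x.1) = x.1.out⁻¹ * y * x.1.out := by
          show (Quotient.mk'' x.1 :
              Quotient (MulAction.orbitRel ↥(Subgroup.zpowers y) (G ⧸ S))).out.out⁻¹
            * y ^ Function.minimalPeriod (fun z : G ⧸ S => y • z)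
              (Quotient.mk'' x.1 :
                Quotient (MulAction.orbitRel ↥(Subgroup.zpowers y) (G ⧸ S))).out
            * (Quotient.mk'' x.1 :
                Quotient (MulAction.orbitRel ↥(Subgroup.zpowers y) (G ⧸ S))).out.out = _
          rw [hn1, pow_one, hout]
        rwa [heq] at hmem⟩
      left_inv := fun q => Subtype.ext (Quotient.out_eq _)
      right_inv := fun x => Subtype.ext (houtfix x.1 x.2.1) }
    have hcard : (Finset.univ.filter (fun q => uu q ∉ M)).card =
        Nat.card {x : G ⧸ S // y • x = x ∧ ¬ pred x} := by
      rw [← Fintype.card_subtype, ← Nat.card_eq_fintype_card]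
      exact Nat.card_congr e2
    rw [hcard] at h3
    exact hcN h3
end
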